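/- arXiv:0803.1346 — 7 statements merged into one kernel-verified Lean document; each statement's English description precedes it below -/
import Mathlib

section
/- Let k be a field and let Γ be an r×r diagonal matrix over k[[t]] with diagonal entries α_1,…,α_r. Let B be an r×r matrix over k[[t]] all of whose entries are divisible by t^m for some positive integer m. Then any eigenvalue β ∈ k[[t_d]] of Γ + B (where t_d^d = t, i.e. β lies in a ramified extension of the power series ring) satisfies ord_t(β − α_i) ≥ m for some index i. -/
/-!
Statement 0 (Lemma `07.4.26.2` of the paper).

Let `k` be a field, `Γ` an `r × r` diagonal matrix over `k[[t]]` with diagonal entries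
`α 1, …, α r`, and `B` an `r × r` matrix over `k[[t]]` all of whose entries are divisible by
`t ^ m` (`m > 0`).  We embed `k[[t]]` into `k[[t_d]]` by the ring homomorphism `φ` with
`φ t = t_d ^ d` (and fixing constants), and view matrices over `k[[t_d]]` as acting on vectors
over `k((t_d))` (`LaurentSeries k`).  If `β ∈ k[[t_d]]` is an eigenvalue of `Γ + B`, i.e. there
is a nonzero eigenvector `v` over `k((t_d))`, then `ord_t (β - α i) ≥ m` for some `i`,
i.e. `t_d ^ (d * m)` divides `β - φ (α i)`.
-/

noncomputable section

open PowerSeries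

namespace MyAux

variable {k : Type} [Field k]

/-- divisibility by X^n transfers to orderTop bound -/
lemma le_orderTop_of_dvd {f : PowerSeries k} {n : ℕ}
    (h : (X : PowerSeries k) ^ n ∣ f) :
    (n : WithTop ℤ) ≤ (HahnSeries.ofPowerSeries ℤ k f).orderTop := by
  by_cases hf : HahnSeries.ofPowerSeries ℤ k f = 0
  · simp [hf]
  · obtain ⟨g, hg⟩ := WithTop.ne_top_iff_exists.mp (HahnSeries.orderTop_ne_top.mpr hf)
    rw [← hg]
    have hco : (HahnSeries.ofPowerSeries ℤ k f).coeff g ≠ 0 :=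
      HahnSeries.coeff_orderTop_ne hg.symm
    by_cases hgr : g ∈ Set.range (fun n : ℕ => (n : ℤ))
    · obtain ⟨N, hN⟩ := hgr
      have hco' : PowerSeries.coeff N f ≠ 0 := by
        rw [← HahnSeries.ofPowerSeries_apply_coeff (Γ := ℤ) f N]
        simpa [hN] using hco
      have hnN : n ≤ N := by
        by_contra hlt
        exact hco' (PowerSeries.X_pow_dvd_iff.mp h N (not_le.mp hlt))
      have : (n : ℤ) ≤ g := by rw [← hN]; show (n:ℤ) ≤ (N:ℤ); exact_mod_cast hnN
      exact_mod_cast this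
    · rw [HahnSeries.ofPowerSeries_apply,
        HahnSeries.embDomain_notin_range (by simpa using hgr)] at hco
      exact absurd rfl hco

lemma dvd_of_le_orderTop {f : PowerSeries k} {n : ℕ}
    (h : (n : WithTop ℤ) ≤ (HahnSeries.ofPowerSeries ℤ k f).orderTop) :
    (X : PowerSeries k) ^ n ∣ f := by
  rw [PowerSeries.X_pow_dvd_iff]
  intro j hj
  have : ((j : ℤ) : WithTop ℤ) < (HahnSeries.ofPowerSeries ℤ k f).orderTop :=
    lt_of_lt_of_le (by exact_mod_cast hj) h
  have h0 := HahnSeries.coeff_eq_zero_of_lt_orderTop this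
  rwa [HahnSeries.ofPowerSeries_apply_coeff] at h0

lemma le_orderTop_sum {ι : Type*} (s : Finset ι) (F : ι → LaurentSeries k)
    {c : WithTop ℤ} (h : ∀ j ∈ s, c ≤ (F j).orderTop) :
    c ≤ (∑ j ∈ s, F j).orderTop := by
  classical
  induction s using Finset.induction_on with
  | empty => simp
  | insert _ _ hns ih =>
    rename_i a s2
    rw [Finset.sum_insert hns]
    refine le_trans ?_ HahnSeries.min_orderTop_le_orderTop_add
    exact le_min (h a (Finset.mem_insert_self a s2))
      (ih fun j hj => h j (Finset.mem_insert_of_mem hj))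

end MyAux

theorem eigenvalue_perturbation_of_diagonal_plus_small
    {k : Type} [Field k] (r d m : ℕ) (hd : 0 < d) (hm : 0 < m)
    (α : Fin r → PowerSeries k)
    (B : Matrix (Fin r) (Fin r) (PowerSeries k))
    (hB : ∀ i j, (X : PowerSeries k) ^ m ∣ B i j)
    (φ : PowerSeries k →+* PowerSeries k)
    (hφC : ∀ a : k, φ (C a) = C a) (hφX : φ X = X ^ d)
    (β : PowerSeries k)
    (v : Fin r → LaurentSeries k) (hv : v ≠ 0)
    (heig :
      ((Matrix.diagonal α + B).map fun a => HahnSeries.ofPowerSeries ℤ k (φ a)).mulVec v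
        = fun i => HahnSeries.ofPowerSeries ℤ k β * v i) :
    ∃ i, (X : PowerSeries k) ^ (d * m) ∣ (β - φ (α i)) := by
  classical
  set ψ : PowerSeries k →+* LaurentSeries k := HahnSeries.ofPowerSeries ℤ k with hψ
  -- choose an index with minimal orderTop
  have hr : (Finset.univ : Finset (Fin r)).Nonempty := by
    rcases Function.ne_iff.mp hv with ⟨j, _⟩
    exact ⟨j, Finset.mem_univ j⟩
  obtain ⟨i, -, hmin⟩ := Finset.exists_min_image Finset.univ
    (fun j => (v j).orderTop) hr
  have hmin' : ∀ j, (v i).orderTop ≤ (v j).orderTop := fun j => hmin j (Finset.mem_univ j)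
  have hvi : v i ≠ 0 := by
    intro h0
    apply hv
    funext j
    have := hmin' j
    rw [h0, HahnSeries.orderTop_zero, top_le_iff, HahnSeries.orderTop_eq_top] at this
    exact this
  -- the row-i equation
  have hrow : ∑ j, ψ (φ ((Matrix.diagonal α + B) i j)) * v j = ψ β * v i := by
    have := congrFun heig i
    simpa [Matrix.mulVec, dotProduct, Matrix.map_apply] using this
  have hdiag : ∑ j, ψ (φ (Matrix.diagonal α i j)) * v j = ψ (φ (α i)) * v i := by
    refine Finset.sum_eq_single_of_mem i (Finset.mem_univ i) ?_ |>.trans ?_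
    · intro j _ hji
      rw [Matrix.diagonal_apply_ne' α hji]
      simp
    · rw [Matrix.diagonal_apply_eq]
  have key : ψ (β - φ (α i)) * v i = ∑ j, ψ (φ (B i j)) * v j := by
    have hsplit : ∑ j, ψ (φ ((Matrix.diagonal α + B) i j)) * v j
        = ψ (φ (α i)) * v i + ∑ j, ψ (φ (B i j)) * v j := by
      rw [← hdiag, ← Finset.sum_add_distrib]
      congr 1
      funext j
      rw [Matrix.add_apply, map_add, map_add, add_mul]
    rw [hsplit] at hrow
    rw [map_sub, sub_mul, ← hrow]
    ring
  -- each entry of φ B is divisible by X^(d*m)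
  have hφB : ∀ j, (X : PowerSeries k) ^ (d * m) ∣ φ (B i j) := by
    intro j
    obtain ⟨c, hc⟩ := hB i j
    refine ⟨φ c, ?_⟩
    rw [hc, map_mul, map_pow, hφX, ← pow_mul]
  -- lower bound on the orderTop of the RHS
  have hRHS : ((d * m : ℕ) : WithTop ℤ) + (v i).orderTop
      ≤ (∑ j, ψ (φ (B i j)) * v j).orderTop := by
    refine MyAux.le_orderTop_sum Finset.univ _ ?_
    intro j _
    refine le_trans ?_ HahnSeries.orderTop_add_le_mul
    exact add_le_add (MyAux.le_orderTop_of_dvd (hφB j)) (hmin' j)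
  rw [← key] at hRHS
  refine ⟨i, ?_⟩
  by_cases hz : ψ (β - φ (α i)) = 0
  · have h0 : β - φ (α i) = 0 := by
      apply HahnSeries.ofPowerSeries_injective (Γ := ℤ)
      rw [map_zero]; exact hz
    simp [h0]
  · apply MyAux.dvd_of_le_orderTop (k := k) (n := d * m)
    have hprod : (ψ (β - φ (α i)) * v i).orderTop
        = (ψ (β - φ (α i))).orderTop + (v i).orderTop := by
      have hne : ψ (β - φ (α i)) * v i ≠ 0 := mul_ne_zero hz hvi
      rw [← HahnSeries.order_eq_orderTop_of_ne_zero hne,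
        ← HahnSeries.order_eq_orderTop_of_ne_zero hz, ← HahnSeries.order_eq_orderTop_of_ne_zero hvi,
        HahnSeries.order_mul hz hvi]
      push_cast
      rfl
    rw [hprod] at hRHS
    obtain ⟨a, ha⟩ := WithTop.ne_top_iff_exists.mp (HahnSeries.orderTop_ne_top.mpr hvi)
    rw [← ha] at hRHS
    obtain ⟨b, hb⟩ := WithTop.ne_top_iff_exists.mp (HahnSeries.orderTop_ne_top.mpr hz)
    rw [← hb] at hRHS ⊢
    exact (WithTop.add_le_add_iff_right (WithTop.coe_ne_top (a := a))).mp hRHS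
end
end

section
/- Let R be a commutative ring, and let P(T) ∈ R[[t]][T] be a monic polynomial of degree r whose specialization P_0(T) at t = 0 factors as P_0 = h̄_1·h̄_2 with h̄_1, h̄_2 monic polynomials in R[T] satisfying a Bézout identity 1 = h̄_1·F_1 + h̄_2·F_2 for some F_1, F_2 ∈ R[T]. Then P(T) factors in R[[t]][T] as P = h_1·h_2 with h_1, h_2 monic and h_i(T) ≡ h̄_i(T) mod t. -/
/-!
Statement 1 (Lemma `07.4.14.1` of the paper): Hensel-type lifting of a coprime factorization.

Let `R` be a commutative ring and `P(T) ∈ R[[t]][T]` a monic polynomial of degree `r` whose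
specialization `P₀(T)` at `t = 0` (obtained by applying the constant-coefficient homomorphism
`R[[t]] → R` to each coefficient) factors as `P₀ = h̄₁ * h̄₂` with `h̄₁, h̄₂` monic and
satisfying a Bézout identity `h̄₁ F₁ + h̄₂ F₂ = 1`.  Then `P` factors as `P = h₁ * h₂` in
`R[[t]][T]` with `h₁, h₂` monic and `hᵢ ≡ h̄ᵢ mod t`.
-/

noncomputable section


namespace HenselPS
open Polynomial Finset

variable {R : Type} [CommRing R]

def slice (n : ℕ) (P : Polynomial (PowerSeries R)) : Polynomial R :=
  ⟨Finsupp.mapRange (PowerSeries.coeff n) (map_zero _) P.toFinsupp.coeff |> AddMonoidAlgebra.ofCoeff⟩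

@[simp] lemma coeff_slice (n k : ℕ) (P : Polynomial (PowerSeries R)) :
    (slice n P).coeff k = PowerSeries.coeff n (P.coeff k) := by
  rcases P with ⟨f⟩
  simp [slice, Polynomial.coeff]

def seq (P : Polynomial (PowerSeries R)) (h1 h2 F1 F2 : Polynomial R) :
    ℕ → Polynomial R × Polynomial R
  | 0 => (h1, h2)
  | (n+1) =>
    let E : Polynomial R := slice (n+1) P -
      ∑ i ∈ (Finset.Ioo 0 (n+1)).attach,
        (seq P h1 h2 F1 F2 i.1).1 * (seq P h1 h2 F1 F2 ((n+1) - i.1)).2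
    (F2 * E + h1 * ((F1 * E) /ₘ h2), (F1 * E) %ₘ h2)
decreasing_by
  · exact (Finset.mem_Ioo.mp i.2).2
  · have := Finset.mem_Ioo.mp i.2; omega

lemma seq_zero (P : Polynomial (PowerSeries R)) (h1 h2 F1 F2 : Polynomial R) :
    seq P h1 h2 F1 F2 0 = (h1, h2) := by rw [seq]

lemma seq_succ (P : Polynomial (PowerSeries R)) (h1 h2 F1 F2 : Polynomial R) (n : ℕ) :
    seq P h1 h2 F1 F2 (n+1) =
      (F2 * (slice (n+1) P -
      ∑ i ∈ (Finset.Ioo 0 (n+1)).attach,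
        (seq P h1 h2 F1 F2 i.1).1 * (seq P h1 h2 F1 F2 ((n+1) - i.1)).2) + h1 * ((F1 * (slice (n+1) P -
      ∑ i ∈ (Finset.Ioo 0 (n+1)).attach,
        (seq P h1 h2 F1 F2 i.1).1 * (seq P h1 h2 F1 F2 ((n+1) - i.1)).2)) /ₘ h2),
       (F1 * (slice (n+1) P -
      ∑ i ∈ (Finset.Ioo 0 (n+1)).attach,
        (seq P h1 h2 F1 F2 i.1).1 * (seq P h1 h2 F1 F2 ((n+1) - i.1)).2)) %ₘ h2) := by
  rw [seq]

lemma degree_mul_lt_of_le_of_lt {p q : Polynomial R} {a b : ℕ}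
    (hp : p.degree ≤ (a : WithBot ℕ)) (hq : q.degree < (b : WithBot ℕ)) :
    (p * q).degree < ((a + b : ℕ) : WithBot ℕ) := by
  rcases eq_or_ne q 0 with rfl | hq0
  · rw [mul_zero, degree_zero]; exact WithBot.bot_lt_coe _
  rcases eq_or_ne p 0 with rfl | hp0
  · rw [zero_mul, degree_zero]; exact WithBot.bot_lt_coe _
  have hpn : p.natDegree ≤ a := natDegree_le_iff_degree_le.mpr hp
  have hqn : q.natDegree < b := (natDegree_lt_iff_degree_lt hq0).mpr hq
  calc (p * q).degree ≤ p.degree + q.degree := degree_mul_le _ _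
    _ = ((p.natDegree + q.natDegree : ℕ) : WithBot ℕ) := by
        rw [degree_eq_natDegree hp0, degree_eq_natDegree hq0]; push_cast; rfl
    _ < _ := by exact_mod_cast add_lt_add_of_le_of_lt hpn hqn

lemma degree_lt_of_monic_mul [Nontrivial R] {h u : Polynomial R} (hm : h.Monic) {d : ℕ}
    (hd : (h * u).degree < ((h.natDegree + d : ℕ) : WithBot ℕ)) :
    u.degree < (d : WithBot ℕ) := by
  rcases eq_or_ne u 0 with rfl | hu0
  · rw [degree_zero]; exact WithBot.bot_lt_coe _
  rw [mul_comm, hm.degree_mul, degree_eq_natDegree hu0, degree_eq_natDegree hm.ne_zero] at hd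
  rw [degree_eq_natDegree hu0]
  exact_mod_cast by
    have : u.natDegree + h.natDegree < h.natDegree + d := by exact_mod_cast hd
    omega

lemma seq_spec [Nontrivial R] (P : Polynomial (PowerSeries R)) (h1 h2 F1 F2 : Polynomial R)
    (hm1 : h1.Monic) (hm2 : h2.Monic)
    (hfac : P.map (PowerSeries.constantCoeff (R := R)) = h1 * h2)
    (hbez : h1 * F1 + h2 * F2 = 1)
    (hsl : ∀ n, 0 < n →
      (slice n P).degree < ((h1.natDegree + h2.natDegree : ℕ) : WithBot ℕ)) :
    ∀ n : ℕ,
      (0 < n → (seq P h1 h2 F1 F2 n).1.degree < (h1.natDegree : WithBot ℕ) ∧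
               (seq P h1 h2 F1 F2 n).2.degree < (h2.natDegree : WithBot ℕ)) ∧
      (∑ i ∈ Finset.range (n+1),
          (seq P h1 h2 F1 F2 i).1 * (seq P h1 h2 F1 F2 (n-i)).2 = slice n P) := by
  intro n
  induction n using Nat.strong_induction_on with
  | _ n ih =>
    match n with
    | 0 =>
      refine ⟨fun h => absurd h (by omega), ?_⟩
      rw [Finset.sum_range_one, seq_zero]
      ext k
      rw [coeff_slice]
      have := congrArg (fun Q => Polynomial.coeff Q k) hfac
      simp only [Polynomial.coeff_map] at this
      simpa [PowerSeries.coeff_zero_eq_constantCoeff] using this.symm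
    | (n+1) =>
      set S := seq P h1 h2 F1 F2 with hS
      set A : Polynomial R := ∑ i ∈ (Finset.Ioo 0 (n+1)).attach,
        (S i.1).1 * (S ((n+1) - i.1)).2 with hA
      set E : Polynomial R := slice (n+1) P - A with hE
      have hdef : S (n+1) = (F2 * E + h1 * ((F1 * E) /ₘ h2), (F1 * E) %ₘ h2) :=
        seq_succ P h1 h2 F1 F2 n
      -- degree of A
      have hAdeg : A.degree < ((h1.natDegree + h2.natDegree : ℕ) : WithBot ℕ) := by
        rw [hA]
        refine (Polynomial.degree_sum_le _ _).trans_lt ?_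
        rw [Finset.sup_lt_iff (WithBot.bot_lt_coe _)]
        intro i hi
        have hmem := Finset.mem_Ioo.mp i.2
        have h1b := (ih i.1 (by omega)).1 (by omega)
        have h2b := (ih ((n+1) - i.1) (by omega)).1 (by omega)
        exact degree_mul_lt_of_le_of_lt h1b.1.le h2b.2
      have hEdeg : E.degree < ((h1.natDegree + h2.natDegree : ℕ) : WithBot ℕ) := by
        rw [hE, sub_eq_add_neg]
        refine (Polynomial.degree_add_le _ _).trans_lt (max_lt (hsl _ (by omega)) ?_)
        rwa [degree_neg]
      -- Bezout identity
      have key : h1 * ((F1 * E) %ₘ h2) + h2 * (F2 * E + h1 * ((F1 * E) /ₘ h2)) = E := by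
        have hdiv := Polynomial.modByMonic_add_div (F1 * E) h2
        linear_combination h1 * hdiv + E * hbez
      have hvdeg : ((F1 * E) %ₘ h2).degree < (h2.natDegree : WithBot ℕ) := by
        have := Polynomial.degree_modByMonic_lt (F1 * E) hm2
        rwa [degree_eq_natDegree hm2.ne_zero] at this
      have hudeg : (F2 * E + h1 * ((F1 * E) /ₘ h2)).degree < (h1.natDegree : WithBot ℕ) := by
        refine degree_lt_of_monic_mul hm2 ?_
        have heq : h2 * (F2 * E + h1 * ((F1 * E) /ₘ h2)) = E - h1 * ((F1 * E) %ₘ h2) := by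
          linear_combination key
        rw [heq, sub_eq_add_neg]
        refine (Polynomial.degree_add_le _ _).trans_lt (max_lt ?_ ?_)
        · rw [Nat.add_comm]; exact hEdeg
        · rw [degree_neg, Nat.add_comm h2.natDegree]
          exact degree_mul_lt_of_le_of_lt (Polynomial.degree_le_natDegree) hvdeg
      refine ⟨fun _ => by rw [hdef]; exact ⟨hudeg, hvdeg⟩, ?_⟩
      -- sum identity
      have hAplain : A = ∑ i ∈ Finset.Ioo 0 (n+1), (S i).1 * (S ((n+1) - i)).2 := by
        rw [hA]
        exact Finset.sum_attach (Finset.Ioo 0 (n+1))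
          (fun j => (S j).1 * (S ((n+1) - j)).2)
      have hmid : ∑ i ∈ Finset.range n, (S (i+1)).1 * (S (n+1-(i+1))).2 = A := by
        rw [hAplain]
        have : Finset.Ioo 0 (n+1) = Finset.Ico 1 (n+1) := by
          ext x; simp only [Finset.mem_Ioo, Finset.mem_Ico]; omega
        rw [this, Finset.sum_Ico_eq_sum_range]
        have hr : n + 1 - 1 = n := by omega
        rw [hr]
        exact Finset.sum_congr rfl fun i hi => by rw [Nat.add_comm 1 i]
      rw [Finset.sum_range_succ', Finset.sum_range_succ, hmid]
      have hS0 : S 0 = (h1, h2) := seq_zero _ _ _ _ _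
      rw [Nat.sub_self, Nat.sub_zero, hS0, hdef]
      have hsl' : slice (n+1) P = E + A := by rw [hE]; ring
      rw [hsl']
      linear_combination key

end HenselPS

theorem hensel_lift_powerseries_factorization
    {R : Type} [CommRing R] (r : ℕ)
    (P : Polynomial (PowerSeries R)) (hP : P.Monic) (hdeg : P.natDegree = r)
    (h1 h2 : Polynomial R) (hm1 : h1.Monic) (hm2 : h2.Monic)
    (hfac : P.map (PowerSeries.constantCoeff (R := R)) = h1 * h2)
    (F1 F2 : Polynomial R) (hbez : h1 * F1 + h2 * F2 = 1) :
    ∃ H1 H2 : Polynomial (PowerSeries R),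
      H1.Monic ∧ H2.Monic ∧ P = H1 * H2 ∧
      H1.map (PowerSeries.constantCoeff (R := R)) = h1 ∧
      H2.map (PowerSeries.constantCoeff (R := R)) = h2 := by
  classical
  rcases subsingleton_or_nontrivial R with hR | hR
  · exact ⟨1, 1, Polynomial.monic_one, Polynomial.monic_one,
      Subsingleton.elim _ _, Subsingleton.elim _ _, Subsingleton.elim _ _⟩
  open HenselPS Polynomial Finset in
  · set d1 := h1.natDegree with hd1
    set d2 := h2.natDegree with hd2
    -- r = d1 + d2
    have hr : d1 + d2 = r := by
      have hmap := hP.natDegree_map (PowerSeries.constantCoeff (R := R))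
      rw [hfac, hm1.natDegree_mul hm2, hdeg] at hmap
      exact hmap
    -- slice degree bound
    have hsl : ∀ n, 0 < n →
        (slice n P).degree < ((d1 + d2 : ℕ) : WithBot ℕ) := by
      intro n hn
      rw [Polynomial.degree_lt_iff_coeff_zero]
      intro m hm
      rw [coeff_slice]
      have hm' : r ≤ m := by exact_mod_cast by rw [← hr]; exact_mod_cast hm
      rcases eq_or_lt_of_le hm' with heq | hlt
      · have : P.coeff m = 1 := by
          rw [← heq, ← hdeg]; exact hP.coeff_natDegree
        rw [this, PowerSeries.coeff_one, if_neg (by omega)]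
      · have : P.coeff m = 0 :=
          Polynomial.coeff_eq_zero_of_natDegree_lt (by omega)
        rw [this, map_zero]
    have spec := seq_spec P h1 h2 F1 F2 hm1 hm2 hfac hbez hsl
    set u : ℕ → Polynomial R := fun n => (seq P h1 h2 F1 F2 n).1 with hu
    set v : ℕ → Polynomial R := fun n => (seq P h1 h2 F1 F2 n).2 with hv
    have hu0 : u 0 = h1 := by show (seq P h1 h2 F1 F2 0).1 = h1; rw [seq_zero]
    have hv0 : v 0 = h2 := by show (seq P h1 h2 F1 F2 0).2 = h2; rw [seq_zero]
    have hucoeff : ∀ n k, d1 ≤ k → 0 < n → (u n).coeff k = 0 := fun n k hk hn =>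
      Polynomial.coeff_eq_zero_of_degree_lt (lt_of_lt_of_le ((spec n).1 hn).1
        (by exact_mod_cast Nat.cast_le.mpr hk))
    have hvcoeff : ∀ n k, d2 ≤ k → 0 < n → (v n).coeff k = 0 := fun n k hk hn =>
      Polynomial.coeff_eq_zero_of_degree_lt (lt_of_lt_of_le ((spec n).1 hn).2
        (by exact_mod_cast Nat.cast_le.mpr hk))
    have hucoeff' : ∀ n k, d1 < k → (u n).coeff k = 0 := by
      intro n k hk
      rcases Nat.eq_zero_or_pos n with rfl | hn
      · rw [hu0]; exact Polynomial.coeff_eq_zero_of_natDegree_lt hk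
      · exact hucoeff n k (by omega) hn
    have hvcoeff' : ∀ n k, d2 < k → (v n).coeff k = 0 := by
      intro n k hk
      rcases Nat.eq_zero_or_pos n with rfl | hn
      · rw [hv0]; exact Polynomial.coeff_eq_zero_of_natDegree_lt hk
      · exact hvcoeff n k (by omega) hn
    set H1 : Polynomial (PowerSeries R) :=
      ∑ k ∈ Finset.range (d1+1),
        Polynomial.monomial k (PowerSeries.mk fun n => (u n).coeff k) with hH1
    set H2 : Polynomial (PowerSeries R) :=
      ∑ k ∈ Finset.range (d2+1),
        Polynomial.monomial k (PowerSeries.mk fun n => (v n).coeff k) with hH2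
    have hcH1 : ∀ k, H1.coeff k = PowerSeries.mk fun n => (u n).coeff k := by
      intro k
      rw [hH1, Polynomial.finset_sum_coeff]
      simp only [Polynomial.coeff_monomial]
      rw [Finset.sum_ite_eq' (Finset.range (d1+1)) k
        (fun k => PowerSeries.mk fun n => (u n).coeff k)]
      by_cases hk : k ∈ Finset.range (d1+1)
      · rw [if_pos hk]
      · rw [if_neg hk]
        ext n
        rw [PowerSeries.coeff_mk, map_zero, hucoeff' n k
          (by simpa [Nat.lt_succ_iff] using hk)]
    have hcH2 : ∀ k, H2.coeff k = PowerSeries.mk fun n => (v n).coeff k := by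
      intro k
      rw [hH2, Polynomial.finset_sum_coeff]
      simp only [Polynomial.coeff_monomial]
      rw [Finset.sum_ite_eq' (Finset.range (d2+1)) k
        (fun k => PowerSeries.mk fun n => (v n).coeff k)]
      by_cases hk : k ∈ Finset.range (d2+1)
      · rw [if_pos hk]
      · rw [if_neg hk]
        ext n
        rw [PowerSeries.coeff_mk, map_zero, hvcoeff' n k
          (by simpa [Nat.lt_succ_iff] using hk)]
    -- top coefficients
    have htop1 : H1.coeff d1 = 1 := by
      rw [hcH1]
      ext n
      rw [PowerSeries.coeff_mk, PowerSeries.coeff_one]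
      rcases Nat.eq_zero_or_pos n with rfl | hn
      · rw [if_pos rfl, hu0]; exact hm1.coeff_natDegree
      · rw [if_neg (by omega), hucoeff n d1 le_rfl hn]
    have htop2 : H2.coeff d2 = 1 := by
      rw [hcH2]
      ext n
      rw [PowerSeries.coeff_mk, PowerSeries.coeff_one]
      rcases Nat.eq_zero_or_pos n with rfl | hn
      · rw [if_pos rfl, hv0]; exact hm2.coeff_natDegree
      · rw [if_neg (by omega), hvcoeff n d2 le_rfl hn]
    have hmon1 : H1.Monic := by
      refine Polynomial.monic_of_natDegree_le_of_coeff_eq_one d1 ?_ htop1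
      rw [Polynomial.natDegree_le_iff_coeff_eq_zero]
      intro N hN
      rw [hcH1]
      ext n
      rw [PowerSeries.coeff_mk, map_zero, hucoeff' n N hN]
    have hmon2 : H2.Monic := by
      refine Polynomial.monic_of_natDegree_le_of_coeff_eq_one d2 ?_ htop2
      rw [Polynomial.natDegree_le_iff_coeff_eq_zero]
      intro N hN
      rw [hcH2]
      ext n
      rw [PowerSeries.coeff_mk, map_zero, hvcoeff' n N hN]
    -- product
    have hprod : P = H1 * H2 := by
      apply Polynomial.ext
      intro k
      apply PowerSeries.ext
      intro n
      calc PowerSeries.coeff n (P.coeff k)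
          = (slice n P).coeff k := (coeff_slice n k P).symm
        _ = (∑ i ∈ Finset.range (n+1), u i * v (n-i)).coeff k := by
            rw [(spec n).2]
        _ = ∑ i ∈ Finset.range (n+1), ∑ x ∈ Finset.HasAntidiagonal.antidiagonal k,
              (u i).coeff x.1 * (v (n-i)).coeff x.2 := by
            rw [Polynomial.finset_sum_coeff]
            exact Finset.sum_congr rfl fun i _ => Polynomial.coeff_mul _ _ _
        _ = ∑ x ∈ Finset.HasAntidiagonal.antidiagonal k, ∑ i ∈ Finset.range (n+1),
              (u i).coeff x.1 * (v (n-i)).coeff x.2 := Finset.sum_comm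
        _ = ∑ x ∈ Finset.HasAntidiagonal.antidiagonal k, ∑ ij ∈ Finset.HasAntidiagonal.antidiagonal n,
              (u ij.1).coeff x.1 * (v ij.2).coeff x.2 := by
            refine Finset.sum_congr rfl fun x _ => ?_
            rw [Finset.Nat.sum_antidiagonal_eq_sum_range_succ_mk
              (fun ij => (u ij.1).coeff x.1 * (v ij.2).coeff x.2) n]
        _ = ∑ x ∈ Finset.HasAntidiagonal.antidiagonal k,
              PowerSeries.coeff n (H1.coeff x.1 * H2.coeff x.2) := by
            refine Finset.sum_congr rfl fun x _ => ?_
            rw [hcH1, hcH2, PowerSeries.coeff_mul]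
            exact Finset.sum_congr rfl fun ij _ => by
              rw [PowerSeries.coeff_mk, PowerSeries.coeff_mk]
        _ = PowerSeries.coeff n ((H1 * H2).coeff k) := by
            rw [Polynomial.coeff_mul, map_sum]
    -- specialization
    have hmap1 : H1.map (PowerSeries.constantCoeff (R := R)) = h1 := by
      apply Polynomial.ext
      intro k
      rw [Polynomial.coeff_map, hcH1]
      have : (PowerSeries.constantCoeff (R := R)) (PowerSeries.mk fun n => (u n).coeff k)
          = (u 0).coeff k := PowerSeries.constantCoeff_mk
      rw [this, hu0]
    have hmap2 : H2.map (PowerSeries.constantCoeff (R := R)) = h2 := by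
      apply Polynomial.ext
      intro k
      rw [Polynomial.coeff_map, hcH2]
      have : (PowerSeries.constantCoeff (R := R)) (PowerSeries.mk fun n => (v n).coeff k)
          = (v 0).coeff k := PowerSeries.constantCoeff_mk
      rw [this, hv0]
    exact ⟨H1, H2, hmon1, hmon2, hprod, hmap1, hmap2⟩
end
end

section
/- Let E be a free ℂ[[s,t]]-module with a relative connection ∇_t : E → E ⊗ Ω¹ with poles, satisfying ∇_t(t^{k+1} s^p ∂_t)(E) ⊂ E for some k ≥ 1 and p ≥ 0. Let F_0 be the induced endomorphism of E_0 := E/tE. If F_0 is invertible, then any meromorphic flat section f = Σ_{j ≥ −N} f_j t^j of E (with f_j ∈ E_0-valued coefficients, ∇_t(t^{k+1}s^p∂_t)f = 0) is zero. -/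
/-!
Statement 4 (Lemma `07.9.19.12` of the paper).

Let `E` be a finite free `ℂ[[s,t]]`-module with a relative connection `∇_t` satisfying
`∇_t(t^{k+1} s^p ∂_t)(E) ⊆ E` for some `k ≥ 1`, `p ≥ 0`.  We work in a frame of `E`, so that
`E = (ℂ[[s,t]])^n` (with `ℂ[[s,t]] = PowerSeries (PowerSeries ℂ)`, outer variable `t`, inner
variable `s`) and the operator `D = ∇_t(t^{k+1} s^p ∂_t)` is given by
`D(g) = s^p t^{k+1} ∂_t g + G ⬝ g` for a matrix `G` with entries in `ℂ[[s,t]]`.  The induced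
endomorphism `F₀` of `E₀ = E/tE` is the matrix `G mod t`.  A meromorphic flat section is an
element `f = t^{-N} g` of `E ⊗ ℂ[[s]]((t))` with `D f = 0`; after multiplying by `t^N` the
flatness equation reads `s^p (t^{k+1} ∂_t g − N t^k g) + G ⬝ g = 0`.

The lemma: if `F₀` is invertible, then every meromorphic flat section vanishes.
-/

noncomputable section

open PowerSeries

local notation "𝔸" => PowerSeries (PowerSeries ℂ)

theorem flat_section_eq_zero_of_leading_endomorphism_isUnit
    (n k p : ℕ) (hk : 1 ≤ k)
    (G : Matrix (Fin n) (Fin n) 𝔸)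
    (hF0 : IsUnit ((G.map (constantCoeff (R := PowerSeries ℂ))).det)) :
    ∀ (N : ℕ) (g : Fin n → 𝔸),
      (∀ i, (C (R := PowerSeries ℂ) X) ^ p *
          ((X : 𝔸) ^ (k + 1) * derivativeFun (g i) - (N : 𝔸) * (X : 𝔸) ^ k * g i)
        + G.mulVec g i = 0) →
      g = 0 := by
  intro N g hg
  set A0 : Matrix (Fin n) (Fin n) (PowerSeries ℂ) := G.map (constantCoeff (R := PowerSeries ℂ)) with hA0
  haveI : Invertible A0 := A0.invertibleOfIsUnitDet hF0
  -- every coefficient of every component of g vanishes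
  have key : ∀ m : ℕ, ∀ i, coeff m (g i) = 0 := by
    intro m
    induction m using Nat.strong_induction_on with
    | _ m ih =>
      -- the vector of m-th coefficients
      set v : Fin n → PowerSeries ℂ := fun j => coeff m (g j) with hv
      have hmul : A0.mulVec v = 0 := by
        funext i
        have h := congrArg (coeff m) (hg i)
        rw [map_add, map_zero] at h
        -- the differential part has coefficient 0
        have h1 : coeff m ((C (R := PowerSeries ℂ) X) ^ p *
            ((X : 𝔸) ^ (k + 1) * derivativeFun (g i) - (N : 𝔸) * (X : 𝔸) ^ k * g i)) = 0 := by
          rw [← map_pow, coeff_C_mul, map_sub]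
          have hd : coeff m ((X : 𝔸) ^ (k + 1) * derivativeFun (g i)) = 0 := by
            rcases lt_or_ge m (k + 1) with hm | hm
            · rw [coeff_X_pow_mul' (derivativeFun (g i)) (k+1) m, if_neg (by omega)]
            · rw [coeff_X_pow_mul' (derivativeFun (g i)) (k+1) m, if_pos hm]
              erw [coeff_derivative]
              rw [ih (m - (k+1) + 1) (by omega) i, zero_mul]
          have hn : coeff m ((N : 𝔸) * (X : 𝔸) ^ k * g i) = 0 := by
            have : (N : 𝔸) * (X : 𝔸) ^ k * g i = (N : 𝔸) * ((X : 𝔸) ^ k * g i) := by ring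
            rw [this, ← map_natCast (C (R := PowerSeries ℂ)) N, coeff_C_mul]
            rcases lt_or_ge m k with hm | hm
            · rw [coeff_X_pow_mul' (g i) k m, if_neg (by omega), mul_zero]
            · rw [coeff_X_pow_mul' (g i) k m, if_pos hm, ih (m - k) (by omega) i, mul_zero]
          rw [hd, hn, sub_zero, mul_zero]
        rw [h1, zero_add] at h
        -- the matrix part
        have h2 : coeff m (G.mulVec g i) = A0.mulVec v i := by
          simp only [Matrix.mulVec, dotProduct, map_sum, coeff_mul]
          rw [Finset.sum_congr rfl]
          intro j _
          rw [Finset.sum_eq_single (0, m)]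
          · simp [hA0, hv, Matrix.map_apply, constantCoeff]
          · rintro ⟨a, b⟩ hab hne
            rw [Finset.HasAntidiagonal.mem_antidiagonal] at hab
            have hb : b < m := by
              rcases Nat.lt_or_ge b m with h' | h'
              · exact h'
              · exfalso; apply hne
                have : b = m := by omega
                subst this
                simp at hab ⊢
                omega
            rw [ih b hb j, mul_zero]
          · intro hmem
            exact absurd (by simp [Finset.mem_antidiagonal]) hmem
        rw [h2] at h
        simpa using h
      intro i
      have : v = 0 := by
        have := congrArg (⅟A0).mulVec hmul
        rwa [Matrix.mulVec_mulVec, invOf_mul_self, Matrix.one_mulVec,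
          Matrix.mulVec_zero] at this
      exact congrFun this i
  funext i
  exact PowerSeries.ext fun m => by simp [key m i]
end
end

section
/- Let A_0 ∈ M_r(ℂ[[s]]) and let B = Σ_{j ≥ −N} B_j t^j ∈ M_r(ℂ[[s]]((t))) satisfy the equation A_0 B − B A_0 + t∂_t B = −C for some C ∈ M_r(ℂ[[s]][[t]]), where A_0 is such that α − β ∉ ℤ∖{0} for any two distinct eigenvalues α, β of A_0(0). Then N ≤ 0, i.e., B ∈ M_r(ℂ[[s,t]]). -/
/-!
Statement 7 (the key residue computation in Proposition `07.9.20.1` of the paper).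

Let `A₀ ∈ M_r(ℂ[[s]])` and let `B = Σ_{j ≥ -N} B_j t^j ∈ M_r(ℂ[[s]]((t)))` (encoded by its
family of coefficients `B : ℤ → M_r(ℂ[[s]])`, supported in degrees `≥ -N`) satisfy
`A₀ B − B A₀ + t ∂_t B = −C` with `C ∈ M_r(ℂ[[s]][[t]])`; since `C` has no polar part, in each
degree `j < 0` this reads `A₀ B_j − B_j A₀ + j B_j = 0`.  Assume that `α − β ∉ ℤ ∖ {0}` for
any two distinct eigenvalues `α, β` of `A₀(0)` (the specialization of `A₀` at `s = 0`).
Then `N ≤ 0`, i.e. `B_j = 0` for all `j < 0`, i.e. `B ∈ M_r(ℂ[[s,t]])`.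
-/

noncomputable section

open Polynomial Matrix

private lemma lsr_comm_pow {R : Type*} [CommRing R] {n : ℕ}
    {M Nm X : Matrix (Fin n) (Fin n) R}
    (h : M * X = X * Nm) : ∀ k : ℕ, M ^ k * X = X * Nm ^ k := by
  intro k
  induction k with
  | zero => simp
  | succ k ih => rw [pow_succ, pow_succ, mul_assoc, h, ← mul_assoc, ih, mul_assoc]

private lemma lsr_comm_aeval {R : Type*} [CommRing R] {n : ℕ}
    {M Nm X : Matrix (Fin n) (Fin n) R}
    (h : M * X = X * Nm) (p : R[X]) :
    (aeval M p) * X = X * (aeval Nm p) := by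
  induction p using Polynomial.induction_on' with
  | add p q hp hq => rw [map_add, map_add, add_mul, mul_add, hp, hq]
  | monomial k c =>
      rw [aeval_monomial, aeval_monomial, mul_assoc, lsr_comm_pow h, ← mul_assoc,
        Algebra.commutes, mul_assoc]

private lemma lsr_detMonoidHom_apply {n : Type*} [DecidableEq n] [Fintype n] {R : Type*}
    [CommRing R] (M : Matrix n n R) : Matrix.detMonoidHom M = M.det := rfl

private lemma lsr_charpoly_eval {n : ℕ} (M : Matrix (Fin n) (Fin n) ℂ) (μ : ℂ) :
    M.charpoly.eval μ = (Matrix.scalar (Fin n) μ - M).det := by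
  rw [Matrix.charpoly, ← coe_evalRingHom, RingHom.map_det]
  congr 1
  ext i j
  by_cases h : i = j <;> simp [charmatrix, h, scalar_apply, Matrix.diagonal]

private lemma lsr_det_aeval_ne_zero {r : ℕ} (A : Matrix (Fin r) (Fin r) ℂ)
    (hres : ∀ α β : ℂ, A.charpoly.IsRoot α → A.charpoly.IsRoot β →
      α ≠ β → ∀ n : ℤ, n ≠ 0 → α - β ≠ (n : ℂ))
    (j : ℤ) (hj : j ≠ 0) :
    (aeval (A + (j : ℤ) • (1 : Matrix (Fin r) (Fin r) ℂ)) A.charpoly).det ≠ 0 := by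
  set M₀ := A + (j : ℤ) • (1 : Matrix (Fin r) (Fin r) ℂ) with hM₀
  have hsplit : A.charpoly.Splits := IsAlgClosed.splits _
  have hP : A.charpoly = (A.charpoly.roots.map fun a => X - C a).prod :=
    hsplit.eq_prod_roots_of_monic (A.charpoly_monic)
  obtain ⟨l, hl⟩ : ∃ l : List ℂ, A.charpoly.roots = ↑l :=
    ⟨A.charpoly.roots.toList, (Multiset.coe_toList _).symm⟩
  rw [hP, hl, Multiset.map_coe, Multiset.prod_coe, map_list_prod (aeval M₀)]
  rw [show ((List.map (⇑(aeval M₀)) (List.map (fun a => X - C a) l)).prod).det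
      = Matrix.detMonoidHom (List.map (⇑(aeval M₀)) (List.map (fun a => X - C a) l)).prod from rfl,
    map_list_prod, List.map_map, List.map_map]
  apply List.prod_ne_zero
  intro h0
  rw [List.mem_map] at h0
  obtain ⟨β, hβl, hdet⟩ := h0
  simp only [Function.comp_apply, lsr_detMonoidHom_apply] at hdet
  have hβ : A.charpoly.IsRoot β := by
    apply isRoot_of_mem_roots
    rw [hl]; exact Multiset.mem_coe.mpr hβl
  have hmat : aeval M₀ (X - C β) = -(Matrix.scalar (Fin r) (β - (j : ℂ)) - A) := by
    simp only [map_sub, aeval_X, aeval_C, hM₀]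
    ext i k
    by_cases h : i = k <;>
      simp [Matrix.algebraMap_matrix_apply, Matrix.one_apply, Matrix.sub_apply,
        Matrix.add_apply, Matrix.neg_apply, Matrix.scalar_apply, Matrix.diagonal_apply, h] <;>
      ring
  have hα : A.charpoly.IsRoot (β - (j : ℂ)) := by
    have : (Matrix.scalar (Fin r) (β - (j : ℂ)) - A).det = 0 := by
      rw [hmat, Matrix.det_neg, mul_eq_zero] at hdet
      rcases hdet with h | h
      · exact absurd h (by simp)
      · exact h
    rw [Polynomial.IsRoot, lsr_charpoly_eval, this]
  set α := β - (j : ℂ) with hαd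
  by_cases hab : α = β
  · apply hj
    have : (j : ℂ) = 0 := by
      have := hab; rw [hαd] at this; linear_combination -this
    exact_mod_cast this
  · exact hres α β hα hβ hab (-j) (neg_ne_zero.mpr hj) (by push_cast; ring)

theorem laurent_solution_is_regular_of_nonresonant
    (r : ℕ) (A0 : Matrix (Fin r) (Fin r) (PowerSeries ℂ))
    (hres : ∀ α β : ℂ,
      ((A0.map (PowerSeries.constantCoeff (R := ℂ))).charpoly.IsRoot α) →
      ((A0.map (PowerSeries.constantCoeff (R := ℂ))).charpoly.IsRoot β) →
      α ≠ β → ∀ n : ℤ, n ≠ 0 → α - β ≠ (n : ℂ))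
    (B : ℤ → Matrix (Fin r) (Fin r) (PowerSeries ℂ))
    (N : ℕ) (hsupp : ∀ j : ℤ, j < -(N : ℤ) → B j = 0)
    (heq : ∀ j : ℤ, j < 0 → A0 * B j - B j * A0 + (j : ℤ) • B j = 0) :
    ∀ j : ℤ, j < 0 → B j = 0 := by
  intro j hj
  have hE := heq j hj
  set X := B j with hX
  set M : Matrix (Fin r) (Fin r) (PowerSeries ℂ) := A0 + (j : ℤ) • 1 with hM
  have hMX : M * X = X * A0 := by
    have h1 : (A0 * X + (j : ℤ) • X) - X * A0 = 0 := by
      rw [← hE]; abel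
    rw [hM, add_mul, smul_mul_assoc, one_mul]
    exact sub_eq_zero.mp h1
  set φ := PowerSeries.constantCoeff (R := ℂ) with hφ
  set U := aeval M A0.charpoly with hU
  have hUX : U * X = 0 := by
    rw [hU, lsr_comm_aeval hMX, Matrix.aeval_self_charpoly, mul_zero]
  -- identify the constant-coefficient specialization of U
  have hΦcomp : (φ.mapMatrix : Matrix (Fin r) (Fin r) (PowerSeries ℂ) →+*
        Matrix (Fin r) (Fin r) ℂ).comp (algebraMap (PowerSeries ℂ) _)
      = (algebraMap ℂ (Matrix (Fin r) (Fin r) ℂ)).comp φ := by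
    ext a : 1
    ext i k
    by_cases h : i = k <;>
      simp [Matrix.algebraMap_matrix_apply, RingHom.mapMatrix_apply, Matrix.map_apply, h]
  have hΦM : φ.mapMatrix M = A0.map φ + (j : ℤ) • 1 := by
    rw [hM, map_add, map_zsmul, _root_.map_one, RingHom.mapMatrix_apply]
  have hΦU : φ.mapMatrix U = aeval (A0.map φ + (j : ℤ) • 1) (A0.map φ).charpoly := by
    rw [hU, aeval_def, Polynomial.hom_eval₂, hΦcomp, ← Polynomial.eval₂_map,
      ← Matrix.charpoly_map, hΦM, ← aeval_def]
  have hunit : IsUnit U := by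
    rw [Matrix.isUnit_iff_isUnit_det, PowerSeries.isUnit_iff_constantCoeff, isUnit_iff_ne_zero]
    have hmap : φ U.det = (φ.mapMatrix U).det := by
      rw [RingHom.map_det, RingHom.mapMatrix_apply]
    rw [hmap, hΦU]
    exact lsr_det_aeval_ne_zero (A0.map φ) hres j hj.ne
  obtain ⟨u, hu⟩ := hunit
  have hXU : X = (↑u⁻¹ : Matrix (Fin r) (Fin r) (PowerSeries ℂ)) * (U * X) := by
    rw [← hu, ← mul_assoc, Units.inv_mul, one_mul]
  rw [hXU, hUX, mul_zero]
end
end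

section
/- Let k be an algebraically closed field of characteristic p > 0 and (E, ∇) a free k[[t]]-module of rank r with connection satisfying ∇(∂_t)(E) ⊂ E·t^{−μ}, where 10·r!·μ < p. Suppose ∇ = d𝔞·id_E + ∇^{reg}, where 𝔞 ∈ k((t))_{<0} with ord_t(𝔞) > −p, and ∇^{reg} is logarithmic. Let ψ and ψ_{reg} denote the p-curvatures of ∇ and ∇^{reg}. Then ψ(t∂_t) = ψ_{reg}(t∂_t) + (t∂_t 𝔞)^p · id_E, and ψ_{reg}(t∂_t) preserves E (i.e. has matrix in M_r(k[[t]])). -/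
/-!
Statement 10 (the twisting formula of Robba–Christol/Gabber used in Lemma `07.4.14.3`).

`k` algebraically closed of characteristic `p > 0`; `(E, ∇)` a free `k[[t]]`-module of rank
`r` inside `W = (k((t)))^r` with `∇(∂_t)(E) ⊆ t^{-μ}E` and `10·r!·μ < p`.  Writing
`D = ∇(t∂_t)` and assuming `∇ = d𝔞·id + ∇^{reg}` with `𝔞 ∈ k((t))_{<0}`, `ord_t 𝔞 > -p`, and
`∇^{reg}` logarithmic (so `D = (t∂_t 𝔞)·id + D^{reg}` with `D^{reg}(E) ⊆ E`), the
`p`-curvatures `ψ(t∂_t) = D^p − D` and `ψ_{reg}(t∂_t) = (D^{reg})^p − D^{reg}` satisfy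
`ψ(t∂_t) = ψ_{reg}(t∂_t) + (t∂_t 𝔞)^p · id`, and `ψ_{reg}(t∂_t)` preserves `E`.
-/

noncomputable section

/-- The derivation `t ∂_t` on formal Laurent series. -/
def tdt {R : Type} [CommRing R] (f : LaurentSeries R) : LaurentSeries R :=
  { coeff := fun n => (n : ℤ) • f.coeff n
    isPWO_support' := f.isPWO_support'.mono (fun n hn => by
      simp only [Function.mem_support] at hn ⊢
      intro h; apply hn; rw [h, smul_zero]) }

namespace PCurvAux

variable {k : Type} [Field k]

@[simp] lemma tdt_coeff (f : LaurentSeries k) (n : ℤ) : (tdt f).coeff n = n • f.coeff n := rfl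

lemma tdt_support (f : LaurentSeries k) : (tdt f).support ⊆ f.support := by
  intro x hx
  rw [HahnSeries.mem_support] at hx ⊢
  intro h; exact hx (by rw [tdt_coeff, h, smul_zero])

lemma tdt_add (f g : LaurentSeries k) : tdt (f + g) = tdt f + tdt g := by
  ext n
  simp [smul_add]

lemma tdt_mul (f g : LaurentSeries k) : tdt (f * g) = tdt f * g + f * tdt g := by
  ext n
  rw [HahnSeries.coeff_add,
    HahnSeries.coeff_mul_left' f.isPWO_support (tdt_support f),
    HahnSeries.coeff_mul_right' g.isPWO_support (tdt_support g),
    tdt_coeff, HahnSeries.coeff_mul, Finset.smul_sum, ← Finset.sum_add_distrib]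
  refine Finset.sum_congr rfl ?_
  intro ij hij
  rw [Finset.mem_addAntidiagonal] at hij
  rw [tdt_coeff, tdt_coeff, smul_mul_assoc, mul_smul_comm, ← hij.2.2, add_smul]

lemma tdt_algebraMap (c : k) : tdt (algebraMap k (LaurentSeries k) c) = 0 := by
  have hC : algebraMap k (LaurentSeries k) c = HahnSeries.single (0 : ℤ) c := by
    simp [HahnSeries.algebraMap_apply', PowerSeries.algebraMap_apply, HahnSeries.ofPowerSeries_C,
      HahnSeries.C_apply]
  ext n
  rw [tdt_coeff, hC]
  by_cases h : n = 0
  · subst h; simp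
  · simp [HahnSeries.coeff_single_of_ne h]

lemma tdt_iterate_coeff (m : ℕ) (f : LaurentSeries k) (n : ℤ) :
    (tdt^[m] f).coeff n = (n ^ m : ℤ) • f.coeff n := by
  induction m generalizing f with
  | zero => simp
  | succ m ih =>
    rw [Function.iterate_succ_apply, ih, tdt_coeff, smul_smul, pow_succ]

variable (p : ℕ) [Fact p.Prime] [CharP k p]

lemma int_pow_card_smul (n : ℤ) (c : k) : (n ^ p : ℤ) • c = n • c := by
  have hd : (p : ℤ) ∣ n ^ p - n := by
    have : ((n ^ p - n : ℤ) : ZMod p) = 0 := by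
      push_cast
      rw [ZMod.pow_card]; ring
    exact_mod_cast (ZMod.intCast_zmod_eq_zero_iff_dvd _ p).mp this
  have : ((n ^ p - n : ℤ) : k) = 0 := (CharP.intCast_eq_zero_iff k p _).mpr hd
  have h2 : ((n ^ p : ℤ) : k) = ((n : ℤ) : k) := by
    push_cast at this
    have := sub_eq_zero.mp this
    push_cast
    exact this
  rw [zsmul_eq_mul, zsmul_eq_mul, h2]

lemma tdt_iterate_card (f : LaurentSeries k) : tdt^[p] f = tdt f := by
  ext n
  rw [tdt_iterate_coeff, tdt_coeff, int_pow_card_smul]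


open MvPolynomial

variable {k : Type} [Field k]

/-- The shift derivation on `k[X₀, X₁, …]`. -/
def Δ : Derivation k (MvPolynomial ℕ k) (MvPolynomial ℕ k) :=
  MvPolynomial.mkDerivation k (fun i => X (i + 1))

@[simp] lemma Δ_X (i : ℕ) : (Δ : Derivation k _ _) (X i) = X (i + 1) :=
  mkDerivation_X _ _ _

/-- The universal (complete Bell) polynomial sequence. -/
def P : ℕ → MvPolynomial ℕ k
  | 0 => 1
  | n + 1 => X 0 * P n + Δ (P n)

@[simp] lemma P_zero : (P 0 : MvPolynomial ℕ k) = 1 := rfl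
lemma P_succ (n : ℕ) : (P (n + 1) : MvPolynomial ℕ k) = X 0 * P n + Δ (P n) := rfl

lemma transfer {S : Type} [CommRing S] [Algebra k S] (δ : S → S)
    (hadd : ∀ x y, δ (x + y) = δ x + δ y)
    (hmul : ∀ x y, δ (x * y) = δ x * y + x * δ y)
    (halg : ∀ c : k, δ (algebraMap k S c) = 0)
    (y : ℕ → S) (hy : ∀ i, δ (y i) = y (i + 1)) (f : MvPolynomial ℕ k) :
    δ (aeval y f) = aeval y (Δ f) := by
  induction f using MvPolynomial.induction_on with
  | C c =>
      rw [aeval_C, halg, ← MvPolynomial.algebraMap_eq, Derivation.map_algebraMap, map_zero]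
  | add f g hf hg => rw [map_add, hadd, hf, hg, map_add, map_add]
  | mul_X f i hf =>
      rw [map_mul, aeval_X, hmul, hf, Derivation.leibniz, smul_eq_mul, smul_eq_mul,
        map_add, map_mul, map_mul, aeval_X, Δ_X, aeval_X, hy]
      ring

lemma pderiv_Δ_zero (f : MvPolynomial ℕ k) :
    pderiv 0 (Δ f) = Δ (pderiv 0 f) := by
  induction f using MvPolynomial.induction_on with
  | C c => simp [pderiv_C, ← MvPolynomial.algebraMap_eq, Derivation.map_algebraMap]
  | add f g hf hg => simp only [map_add, hf, hg]
  | mul_X f i hf =>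
      simp only [map_add, Derivation.leibniz, smul_eq_mul, Δ_X, hf]
      rcases eq_or_ne i 0 with rfl | hi
      · simp only [pderiv_X_self, pderiv_X_of_ne (by omega : (1:ℕ) ≠ 0),
          Derivation.map_one_eq_zero, map_zero]
        ring
      · simp only [pderiv_X_of_ne hi, pderiv_X_of_ne (by omega : i + 1 ≠ 0), map_zero]
        ring

lemma pderiv_Δ_succ (j : ℕ) (f : MvPolynomial ℕ k) :
    pderiv (j + 1) (Δ f) = Δ (pderiv (j + 1) f) + pderiv j f := by
  induction f using MvPolynomial.induction_on with
  | C c => simp [pderiv_C, ← MvPolynomial.algebraMap_eq, Derivation.map_algebraMap]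
  | add f g hf hg =>
      simp only [map_add, hf, hg]
      ring
  | mul_X f i hf =>
      simp only [map_add, Derivation.leibniz, smul_eq_mul, Δ_X, hf]
      rcases eq_or_ne i (j + 1) with rfl | hij
      · simp only [pderiv_X_self, pderiv_X_of_ne (show j + 1 + 1 ≠ j + 1 by omega),
          pderiv_X_of_ne (show j + 1 ≠ j by omega),
          Derivation.map_one_eq_zero, map_zero]
        ring
      · rcases eq_or_ne i j with rfl | hij2
        · simp only [pderiv_X_of_ne (by omega : i ≠ i + 1), pderiv_X_self,
            Derivation.map_one_eq_zero, map_zero]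
          ring
        · simp only [pderiv_X_of_ne hij, pderiv_X_of_ne (by omega : i + 1 ≠ j + 1),
            pderiv_X_of_ne hij2, map_zero]
          ring

lemma pderiv_P (n j : ℕ) :
    pderiv j (P n : MvPolynomial ℕ k) = n.choose (j + 1) • P (n - 1 - j) := by
  induction n generalizing j with
  | zero => simp [P_zero, pderiv_one]
  | succ n ih =>
    rw [P_succ, map_add, pderiv_mul]
    cases j with
    | zero =>
        rw [pderiv_Δ_zero, ih 0, pderiv_X_self, one_mul, map_nsmul, mul_smul_comm, add_assoc,
          ← smul_add]
        simp only [Nat.zero_add, Nat.sub_zero, Nat.add_sub_cancel]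
        cases n with
        | zero => simp
        | succ m =>
            rw [show m + 1 - 1 = m by omega, ← P_succ, Nat.choose_one_right,
              Nat.choose_one_right]
            conv_rhs => rw [succ_nsmul]
            exact add_comm _ _
    | succ j =>
        rw [pderiv_Δ_succ, ih (j + 1), ih j, pderiv_X_of_ne (by omega : (0:ℕ) ≠ j + 1),
          zero_mul, zero_add, map_nsmul, mul_smul_comm, ← add_assoc, ← smul_add]
        have harith : n + 1 - 1 - (j + 1) = n - 1 - j := by omega
        rw [harith]
        have hchoose : (n + 1).choose (j + 1 + 1) = n.choose (j + 2) + n.choose (j + 1) := by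
          rw [Nat.choose_succ_succ]
          exact Nat.add_comm _ _
        rw [hchoose, add_smul]
        congr 1
        rcases Nat.lt_or_ge n (j + 2) with hn | hn
        · rw [Nat.choose_eq_zero_of_lt hn, zero_smul, zero_smul]
        · have h5 : n - 1 - j = (n - 1 - (j + 1)) + 1 := by omega
          rw [h5, P_succ]

lemma Δ_C_mul (c : k) (f : MvPolynomial ℕ k) :
    (Δ : Derivation k _ _) (C c * f) = C c * Δ f := by
  rw [Derivation.leibniz, smul_eq_mul, smul_eq_mul, ← MvPolynomial.algebraMap_eq,
    Derivation.map_algebraMap, mul_zero, add_zero]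

/-- The scaling endomorphism `Xᵢ ↦ s^(i+1) Xᵢ`. -/
def φ (s : k) : MvPolynomial ℕ k →ₐ[k] MvPolynomial ℕ k :=
  aeval fun i => C (s ^ (i + 1)) * X i

lemma φ_Δ (s : k) (f : MvPolynomial ℕ k) : φ s (Δ f) = C s * Δ (φ s f) := by
  induction f using MvPolynomial.induction_on with
  | C c =>
      rw [← MvPolynomial.algebraMap_eq, Derivation.map_algebraMap, map_zero, AlgHom.commutes,
        MvPolynomial.algebraMap_eq, ← MvPolynomial.algebraMap_eq, Derivation.map_algebraMap,
        mul_zero]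
  | add f g hf hg => simp only [map_add, hf, hg]; ring
  | mul_X f i hf =>
      simp only [Derivation.leibniz, smul_eq_mul, map_add, map_mul, Δ_X, hf]
      rw [show (φ s) (X i) = C (s ^ (i + 1)) * X i from aeval_X _ i,
        show (φ s) (X (i + 1)) = C (s ^ (i + 2)) * X (i + 1) from aeval_X _ (i + 1),
        Δ_C_mul, Δ_X, show (i + 2) = (i + 1) + 1 from rfl, pow_succ, map_mul]
      ring

lemma φ_P (s : k) (n : ℕ) : φ s (P n : MvPolynomial ℕ k) = C (s ^ n) * P n := by
  induction n with
  | zero => simp [P_zero]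
  | succ n ih =>
      rw [P_succ, map_add, map_mul, ih, φ_Δ, ih]
      have : (Δ : Derivation k _ _) (C (s ^ n) * P n) = C (s ^ n) * Δ (P n) := by
        rw [Derivation.leibniz, smul_eq_mul, smul_eq_mul, ← MvPolynomial.algebraMap_eq,
          Derivation.map_algebraMap, mul_zero, add_zero]
      rw [this, pow_succ, map_mul]
      have hx0 : (φ s) (X 0) = C (s ^ 1) * X 0 := aeval_X _ 0
      rw [hx0, pow_one]
      ring

lemma coeff_pderiv (j : ℕ) (m : ℕ →₀ ℕ) (f : MvPolynomial ℕ k) :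
    coeff m (pderiv j f) = ((m j + 1 : ℕ) : k) * coeff (m + Finsupp.single j 1) f := by
  induction f using MvPolynomial.induction_on' with
  | add f g hf hg => rw [map_add, coeff_add, hf, hg, coeff_add, mul_add]
  | monomial s a =>
      rw [pderiv_monomial, coeff_monomial, coeff_monomial]
      rcases eq_or_ne s (m + Finsupp.single j 1) with rfl | hs
      · rw [add_tsub_cancel_right, if_pos rfl, if_pos rfl, Finsupp.add_apply,
          Finsupp.single_eq_same]
        push_cast
        ring
      · rw [if_neg hs, mul_zero]
        by_cases he : s - Finsupp.single j 1 = m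
        · rw [if_pos he]
          have hsj : s j = 0 := by
            by_contra h0
            apply hs
            have hle : Finsupp.single j 1 ≤ s := by
              rw [Finsupp.single_le_iff]; omega
            rw [← he, tsub_add_cancel_of_le hle]
          rw [hsj]
          simp
        · rw [if_neg he]

lemma pderiv_zero_dvd (p : ℕ) [Fact p.Prime] [CharP k p] {f : MvPolynomial ℕ k} {j : ℕ}
    (h : pderiv j f = 0) {m : ℕ →₀ ℕ} (hm : coeff m f ≠ 0) : p ∣ m j := by
  rcases Nat.eq_zero_or_pos (m j) with h0 | h0
  · simp [h0]
  · have hle : Finsupp.single j 1 ≤ m := by rw [Finsupp.single_le_iff]; omega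
    have key := coeff_pderiv j (m - Finsupp.single j 1) f
    rw [h, coeff_zero, tsub_add_cancel_of_le hle] at key
    have harg : ((m - Finsupp.single j 1 : ℕ →₀ ℕ)) j + 1 = m j := by
      rw [Finsupp.tsub_apply, Finsupp.single_eq_same]; omega
    rw [harg] at key
    have hcast : ((m j : ℕ) : k) = 0 := by
      rcases mul_eq_zero.mp key.symm with h' | h'
      · exact h'
      · exact absurd h' hm
    exact (CharP.cast_eq_zero_iff k p _).mp hcast

/-- weight of a monomial exponent -/
def wt (m : ℕ →₀ ℕ) : ℕ := m.sum fun i e => (i + 1) * e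

lemma φ_monomial (s : k) (m : ℕ →₀ ℕ) (a : k) :
    φ s (monomial m a) = monomial m (a * s ^ wt m) := by
  rw [φ, aeval_monomial]
  have h1 : (m.prod fun i e => (C (s ^ (i + 1)) * X i) ^ e)
      = ∏ i ∈ m.support, (C (s ^ (i + 1)) * X i) ^ m i := rfl
  rw [h1]
  have h2 : ∀ i ∈ m.support, (C (s ^ (i + 1)) * X i) ^ m i
      = C (s ^ ((i + 1) * m i)) * X i ^ m i := by
    intro i _
    rw [mul_pow, ← map_pow, ← pow_mul]
  rw [Finset.prod_congr rfl h2, Finset.prod_mul_distrib, ← map_prod,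
    Finset.prod_pow_eq_pow_sum, prod_X_pow_eq_monomial]
  have h3 : algebraMap k (MvPolynomial ℕ k) a = C a := rfl
  rw [h3, ← mul_assoc, ← map_mul, C_mul_monomial, mul_one]
  rfl

lemma coeff_φ (s : k) (m : ℕ →₀ ℕ) (f : MvPolynomial ℕ k) :
    coeff m (φ s f) = s ^ wt m * coeff m f := by
  induction f using MvPolynomial.induction_on' with
  | add f g hf hg => rw [map_add, coeff_add, hf, hg, coeff_add, mul_add]
  | monomial s' a =>
      rw [φ_monomial, coeff_monomial, coeff_monomial]
      rcases eq_or_ne s' m with rfl | h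
      · rw [if_pos rfl, if_pos rfl]; ring
      · rw [if_neg h, if_neg h, mul_zero]

variable (p : ℕ) [Fact p.Prime] [CharP k p] [Infinite k]

lemma P_card : (P p : MvPolynomial ℕ k) = X 0 ^ p + X (p - 1) := by
  have hp : p.Prime := Fact.out
  have hp2 := hp.two_le
  set c : MvPolynomial ℕ k := P p - X (p - 1) with hc
  have hpd : ∀ j, pderiv j c = 0 := by
    intro j
    rw [hc, map_sub, pderiv_P]
    rcases lt_trichotomy j (p - 1) with hj | hj | hj
    · obtain ⟨e, he⟩ := hp.dvd_choose_self (by omega : j + 1 ≠ 0) (by omega : j + 1 < p)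
      rw [pderiv_X_of_ne (by omega : p - 1 ≠ j), he, mul_smul,
        ← Nat.cast_smul_eq_nsmul k p, CharP.cast_eq_zero, zero_smul, sub_zero]
    · rw [hj, pderiv_X_self, show p - 1 + 1 = p by omega, Nat.choose_self,
        show p - 1 - (p - 1) = 0 by omega, P_zero, one_smul, sub_self]
    · rw [Nat.choose_eq_zero_of_lt (by omega), zero_smul,
        pderiv_X_of_ne (by omega : p - 1 ≠ j), sub_zero]
  have hphi : ∀ s : k, φ s c = C (s ^ p) * c := by
    intro s
    rw [hc, map_sub, φ_P, show (φ s) (X (p - 1)) = C (s ^ (p - 1 + 1)) * X (p - 1) from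
      aeval_X _ _, show p - 1 + 1 = p by omega, mul_sub]
  have hsupp : ∀ m ∈ c.support, m = Finsupp.single 0 p := by
    intro m hm
    have hcm : coeff m c ≠ 0 := mem_support_iff.mp hm
    have hdvd : ∀ j, p ∣ m j := fun j => pderiv_zero_dvd p (hpd j) hcm
    have hw : wt m = p := by
      have key : ∀ s : k, s ^ wt m = s ^ p := by
        intro s
        have h1 := congrArg (coeff m) (hphi s)
        rw [coeff_φ, coeff_C_mul] at h1
        exact mul_right_cancel₀ hcm h1
      by_contra hne
      have hz : (Polynomial.X ^ wt m - Polynomial.X ^ p : Polynomial k) = 0 := by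
        apply Polynomial.zero_of_eval_zero
        intro x; simp [key x]
      have h2 := congrArg (fun q => Polynomial.coeff q p) hz
      simp only [Polynomial.coeff_sub, Polynomial.coeff_X_pow, Polynomial.coeff_zero] at h2
      rw [if_neg (Ne.symm hne)] at h2
      simp at h2
    have hm0 : m ≠ 0 := by
      rintro rfl
      rw [wt, Finsupp.sum_zero_index] at hw
      omega
    obtain ⟨j, hj⟩ : ∃ j, m j ≠ 0 := by
      by_contra hall
      push_neg at hall
      exact hm0 (Finsupp.ext fun a => hall a)
    have hjp : p ≤ m j := Nat.le_of_dvd (Nat.pos_of_ne_zero hj) (hdvd j)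
    have hterm : (j + 1) * m j ≤ wt m := by
      rw [wt, Finsupp.sum]
      exact Finset.single_le_sum (f := fun i => (i + 1) * m i) (fun i _ => Nat.zero_le _)
        (Finsupp.mem_support_iff.mpr hj)
    have hmj : m j = p := by nlinarith
    have hj0 : j = 0 := by nlinarith
    subst hj0
    refine Finsupp.ext fun i => ?_
    rcases eq_or_ne i 0 with rfl | hi
    · rw [Finsupp.single_eq_same, hmj]
    · rw [Finsupp.single_eq_of_ne hi]
      by_contra hne
      have hsub : ({0, i} : Finset ℕ) ⊆ m.support := by
        intro x hx
        simp only [Finset.mem_insert, Finset.mem_singleton] at hx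
        rcases hx with rfl | rfl
        · exact Finsupp.mem_support_iff.mpr hj
        · exact Finsupp.mem_support_iff.mpr hne
      have hsum : ∑ x ∈ ({0, i} : Finset ℕ), (x + 1) * m x ≤ wt m := by
        rw [wt, Finsupp.sum]
        exact Finset.sum_le_sum_of_subset hsub
      rw [Finset.sum_pair (by omega : (0 : ℕ) ≠ i)] at hsum
      have h1 : 1 ≤ (i + 1) * m i := by
        have := Nat.pos_of_ne_zero hne
        nlinarith
      omega
  have hcform : c = monomial (Finsupp.single 0 p) (coeff (Finsupp.single 0 p) c) := by
    ext m'
    rw [coeff_monomial]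
    split_ifs with h
    · rw [h]
    · by_contra hne
      exact h ((hsupp m' (mem_support_iff.mpr hne)).symm)
  have hy1 : ∀ i : ℕ, i ≠ 0 → (fun i : ℕ => if i = 0 then (1 : k) else 0) i = 0 := by
    intro i hi; simp [hi]
  set y0 : ℕ → k := fun i => if i = 0 then 1 else 0 with hy0
  have htr : ∀ f : MvPolynomial ℕ k, aeval y0 (Δ f) = 0 := by
    intro f
    have := transfer (S := k) (fun _ => (0 : k)) (by simp) (by intro x y; simp)
      (by intro c'; rfl) y0 (by intro i; simp [hy0]) f
    exact this.symm
  have heval : ∀ n, aeval y0 (P n : MvPolynomial ℕ k) = 1 := by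
    intro n
    induction n with
    | zero => simp [P_zero]
    | succ n ih =>
        rw [P_succ, map_add, map_mul, aeval_X, htr (P n), ih, add_zero, mul_one]
        simp [hy0]
  have hcval : aeval y0 c = 1 := by
    rw [hc, map_sub, heval, aeval_X, show y0 (p - 1) = 0 by
      simp only [hy0]; rw [if_neg (by omega : p - 1 ≠ 0)], sub_zero]
  have hαval : aeval y0 c = coeff (Finsupp.single 0 p) c := by
    conv_lhs => rw [hcform]
    rw [aeval_monomial, Finsupp.prod_single_index (by simp)]
    have : y0 0 = 1 := by simp [hy0]
    rw [this, one_pow, mul_one]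
    rfl
  have hα : coeff (Finsupp.single 0 p) c = 1 := by rw [← hαval, hcval]
  have hcx : c = X 0 ^ p := by
    rw [hcform, hα, X_pow_eq_monomial]
  have := hc ▸ hcx
  exact sub_eq_iff_eq_add.mp this


section Kside

variable {k : Type} [Field k] (p : ℕ) [Fact p.Prime] [CharP k p]

/-- the Bell sequence attached to `a` and the derivation `t∂ₜ` -/
def gg (a : LaurentSeries k) (n : ℕ) : LaurentSeries k :=
  MvPolynomial.aeval (R := k) (fun i => tdt^[i] a) (P n)

lemma gg_zero (a : LaurentSeries k) : gg a 0 = 1 := by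
  show MvPolynomial.aeval (R := k) (fun i => tdt^[i] a) (P 0) = 1
  rw [P_zero, map_one]

lemma gg_succ (a : LaurentSeries k) (n : ℕ) :
    gg a (n + 1) = a * gg a n + tdt (gg a n) := by
  show MvPolynomial.aeval (R := k) (fun i => tdt^[i] a) (P (n + 1))
    = a * MvPolynomial.aeval (R := k) (fun i => tdt^[i] a) (P n)
      + tdt (MvPolynomial.aeval (R := k) (fun i => tdt^[i] a) (P n))
  rw [P_succ, map_add, map_mul, MvPolynomial.aeval_X,
    ← transfer tdt tdt_add tdt_mul tdt_algebraMap _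
      (fun i => (Function.iterate_succ_apply' tdt i a).symm) (P n),
    Function.iterate_zero_apply]

lemma gg_card [Infinite k] (𝔞 : LaurentSeries k) :
    gg (tdt 𝔞) p = (tdt 𝔞) ^ p + tdt 𝔞 := by
  show MvPolynomial.aeval (R := k) (fun i => tdt^[i] (tdt 𝔞)) (P p) = (tdt 𝔞) ^ p + tdt 𝔞
  rw [P_card p, map_add, map_pow, MvPolynomial.aeval_X, MvPolynomial.aeval_X,
    Function.iterate_zero_apply]
  congr 1
  have hp' : p.Prime := Fact.out
  have hps : p - 1 + 1 = p := by have := hp'.pos; omega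
  have h1 : tdt^[p - 1] (tdt 𝔞) = tdt^[p] 𝔞 := by
    conv_rhs => rw [← hps]
    exact (Function.iterate_succ_apply tdt (p - 1) 𝔞).symm
  rw [h1]
  exact tdt_iterate_card p 𝔞

end Kside

end PCurvAux

/-- the standard lattice `E = (k[[t]])^r ⊆ (k((t)))^r` -/
def lattice (k : Type) [Field k] (r : ℕ) : Set (Fin r → LaurentSeries k) :=
  {w | ∀ i (n : ℤ), n < 0 → (w i).coeff n = 0}

set_option maxHeartbeats 1000000 in
theorem p_curvature_of_twist
    (k : Type) [Field k] [IsAlgClosed k] (p : ℕ) [Fact p.Prime] [CharP k p]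
    (r μ : ℕ) (hμ : 10 * r.factorial * μ < p)
    (𝔞 : LaurentSeries k)
    (h𝔞neg : ∀ n : ℤ, 0 ≤ n → 𝔞.coeff n = 0)
    (h𝔞ord : ∀ n : ℤ, n ≤ -(p : ℤ) → 𝔞.coeff n = 0)
    (D Dreg : Module.End k (Fin r → LaurentSeries k))
    (hD : ∀ (a : LaurentSeries k) (w : Fin r → LaurentSeries k),
      D (a • w) = tdt a • w + a • D w)
    (hDreg : ∀ (a : LaurentSeries k) (w : Fin r → LaurentSeries k),
      Dreg (a • w) = tdt a • w + a • Dreg w)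
    (hsplit : ∀ w, D w = tdt 𝔞 • w + Dreg w)
    (hpole : ∀ w ∈ lattice k r, ∀ i (n : ℤ), n < 1 - (μ : ℤ) → (D w i).coeff n = 0)
    (hlog : ∀ w ∈ lattice k r, Dreg w ∈ lattice k r) :
    (∀ w, (D ^ p) w - D w = (Dreg ^ p) w - Dreg w + (tdt 𝔞) ^ p • w) ∧
    (∀ w ∈ lattice k r, (Dreg ^ p) w - Dreg w ∈ lattice k r) := by
  classical
  have hp : p.Prime := Fact.out
  -- instance-stable smul identities on `W`
  have hsmulmul : ∀ (x y : LaurentSeries k) (v : Fin r → LaurentSeries k),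
      x • y • v = (x * y) • v := fun x y v => (mul_smul x y v).symm
  have hsmuladd : ∀ (x y : LaurentSeries k) (v : Fin r → LaurentSeries k),
      x • v + y • v = (x + y) • v := fun x y v => (add_smul x y v).symm
  have honesmul : ∀ v : Fin r → LaurentSeries k, (1 : LaurentSeries k) • v = v :=
    fun v => one_smul _ v
  have hnsmuladd : ∀ (c : ℕ) (u v : Fin r → LaurentSeries k), c • (u + v) = c • u + c • v :=
    fun c u v => nsmul_add u v c
  constructor
  · -- Part 1 : the twisting formula for the p-curvature
    obtain ⟨a, ha⟩ : ∃ a : LaurentSeries k, tdt 𝔞 = a := ⟨tdt 𝔞, rfl⟩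
    rw [ha] at hsplit ⊢
    obtain ⟨G, h0, hgsucc, hGp⟩ : ∃ G : ℕ → LaurentSeries k, G 0 = 1 ∧
        (∀ n, G (n + 1) = a * G n + tdt (G n)) ∧ G p = a ^ p + a := by
      refine ⟨PCurvAux.gg a, PCurvAux.gg_zero a, PCurvAux.gg_succ a, ?_⟩
      rw [← ha]
      exact PCurvAux.gg_card p 𝔞
    have lemA : ∀ (n : ℕ) (w : Fin r → LaurentSeries k),
        (D ^ n) w = ∑ j ∈ Finset.range (n + 1),
          n.choose j • (G (n - j) • ((Dreg ^ j) w)) := by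
      intro n
      induction n with
      | zero =>
          intro w
          rw [Finset.sum_range_one, Nat.choose_self, Nat.sub_zero, one_smul]
          rw [h0, honesmul, pow_zero, pow_zero]
      | succ n ih =>
          intro w
          have hpow : (D ^ (n + 1)) w = D ((D ^ n) w) := by
            rw [pow_succ']; rfl
          rw [hpow, ih w, map_sum]
          have hterm : ∀ j, D (n.choose j • (G (n - j) • ((Dreg ^ j) w)))
              = n.choose j • (G (n - j + 1) • ((Dreg ^ j) w))
                + n.choose j • (G (n - j) • ((Dreg ^ (j + 1)) w)) := by
            intro j
            rw [map_nsmul, hD]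
            have hs : D ((Dreg ^ j) w) = a • ((Dreg ^ j) w) + (Dreg ^ (j + 1)) w := by
              rw [hsplit ((Dreg ^ j) w)]
              congr 1
              rw [pow_succ']; rfl
            rw [hs, smul_add (G (n - j)), hsmulmul, mul_comm (G (n - j)) a, ← add_assoc,
              hsmuladd, add_comm (tdt (G (n - j))) (a * G (n - j)), ← hgsucc, hnsmuladd]
          rw [Finset.sum_congr rfl fun j _ => hterm j, Finset.sum_add_distrib]
          have hA : (∑ j ∈ Finset.range (n + 1), n.choose j • (G (n - j + 1) • ((Dreg ^ j) w)))
              = (∑ j ∈ Finset.range (n + 1),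
                  n.choose (j + 1) • (G (n - j) • ((Dreg ^ (j + 1)) w)))
                + G (n + 1) • w := by
            conv_lhs => rw [Finset.sum_range_succ'
              (fun j => n.choose j • (G (n - j + 1) • ((Dreg ^ j) w))) n]
            congr 1
            · rw [Finset.sum_range_succ, Nat.choose_succ_self, zero_smul, add_zero]
              refine Finset.sum_congr rfl ?_
              intro j hj
              rw [Finset.mem_range] at hj
              rw [show n - (j + 1) + 1 = n - j by omega]
            · simp
          have hrhs : (∑ j ∈ Finset.range (n + 1 + 1),
                (n + 1).choose j • (G (n + 1 - j) • ((Dreg ^ j) w)))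
              = ((∑ j ∈ Finset.range (n + 1),
                  n.choose j • (G (n - j) • ((Dreg ^ (j + 1)) w)))
                + (∑ j ∈ Finset.range (n + 1),
                  n.choose (j + 1) • (G (n - j) • ((Dreg ^ (j + 1)) w))))
                + G (n + 1) • w := by
            rw [Finset.sum_range_succ'
              (fun j => (n + 1).choose j • (G (n + 1 - j) • ((Dreg ^ j) w))) (n + 1)]
            congr 1
            · rw [← Finset.sum_add_distrib]
              refine Finset.sum_congr rfl ?_
              intro j hj
              rw [Nat.choose_succ_succ, Nat.succ_sub_succ, add_smul]
            · simp
          rw [hrhs, hA]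
          abel
    have hcollapse : ∀ w, (D ^ p) w = G p • w + (Dreg ^ p) w := by
      intro w
      rw [lemA p w]
      have hsub : ({0, p} : Finset ℕ) ⊆ Finset.range (p + 1) := by
        intro x hx
        simp only [Finset.mem_insert, Finset.mem_singleton] at hx
        rcases hx with rfl | rfl
        · exact Finset.mem_range.mpr (by omega)
        · exact Finset.mem_range.mpr (by omega)
      have hz : ∀ j ∈ Finset.range (p + 1), j ∉ ({0, p} : Finset ℕ) →
          p.choose j • (G (p - j) • ((Dreg ^ j) w)) = 0 := by
        intro j hjr hjn
        rw [Finset.mem_range] at hjr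
        simp only [Finset.mem_insert, Finset.mem_singleton, not_or] at hjn
        obtain ⟨e, he⟩ := hp.dvd_choose_self hjn.1 (by omega)
        rw [he, mul_smul, ← Nat.cast_smul_eq_nsmul k p, CharP.cast_eq_zero, zero_smul]
      rw [← Finset.sum_subset hsub hz, Finset.sum_pair (by omega : (0 : ℕ) ≠ p),
        Nat.choose_zero_right, Nat.choose_self, one_smul, one_smul, Nat.sub_zero,
        Nat.sub_self]
      rw [h0, honesmul]
      have hD0 : (Dreg ^ 0) w = w := by simp
      rw [hD0]
    intro w
    have hexp : (a ^ p + a) • w = a ^ p • w + a • w := (hsmuladd _ _ _).symm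
    rw [hcollapse w, hsplit w, hGp, hexp]
    abel
  · -- Part 2 : the regular p-curvature preserves the lattice
    have hpowlat : ∀ (n : ℕ), ∀ w ∈ lattice k r, (Dreg ^ n) w ∈ lattice k r := by
      intro n
      induction n with
      | zero => intro w hw; rw [pow_zero]; exact hw
      | succ n ih =>
          intro w hw
          have h1 : (Dreg ^ (n + 1)) w = Dreg ((Dreg ^ n) w) := by
            rw [pow_succ']; rfl
          rw [h1]
          exact hlog _ (ih w hw)
    intro w hw i n hn
    have h1 := hpowlat p w hw i n hn
    have h2 := hlog w hw i n hn
    rw [Pi.sub_apply, HahnSeries.coeff_sub, h1, h2, sub_zero]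
end
end

section
/- Let k be algebraically closed of characteristic 0 (or with the ramification assumptions of the paper) and let E be a Deligne–Malgrange lattice of an unramified meromorphic connection (E((t)), ∇), i.e. the irregular decomposition E((t)) = ⊕_𝔞 E_𝔞((t)) restricts to E = ⊕_𝔞 E_𝔞 over k[[t]]. Let 𝐯 be any k[[t]]-frame of E and A ∈ M_r(k((t))) the matrix of ∇(t∂_t) in this frame. Then Irr(E((t)), ∇) = { I_t(α_−) : α an eigenvalue of A in k((t_d)) }. -/
/-!
Statement 12 (Lemma `07.4.26.3` of the paper).

`k` algebraically closed of characteristic `0`.  Let `E` be a Deligne–Malgrange lattice of an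
unramified meromorphic connection `(E((t)), ∇)`: in a frame compatible with the irregular
decomposition the matrix of `∇(t∂_t)` is `A₁ = diag(t∂_t 𝔞ᵢ) + Rm` with irregular values
`𝔞ᵢ ∈ k((t))_{<0}` and `Rm ∈ M_r(k[[t]])`, `Rm i j = 0` unless `𝔞ᵢ = 𝔞ⱼ`; so
`Irr(E((t)),∇) = range 𝔞`.  An arbitrary frame `𝐯 = 𝐯₁ G`, `G ∈ GL_r(k[[t]])`, has connection
matrix `A = G⁻¹A₁G + G⁻¹ (t∂_t G)`.  We work inside `L = k((t_d))` (`LaurentSeries k`,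
exponents in `t_d`, `t = t_d^d`), so `k((t))` (resp. `k[[t]]`) consists of the Laurent series
supported on `dℤ` (resp. `dℤ_{≥0}`), and `t∂_t = d⁻¹ t_d∂_{t_d} =: τ`; the characteristic
polynomial of `A` is assumed to split over `L` (`d` is chosen appropriately).

Conclusion: `Irr(E((t)), ∇) = { I_t(α₋) : α an eigenvalue of A in k((t_d)) }`.
-/

noncomputable section

/-- the negative (polar) part of a Laurent series -/
def negPart {R : Type} [CommRing R] (f : LaurentSeries R) : LaurentSeries R :=
  { coeff := fun n => if n < 0 then f.coeff n else 0
    isPWO_support' := f.isPWO_support'.mono (fun n hn => by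
      simp only [Function.mem_support] at hn ⊢
      intro h; apply hn; split <;> simp [h]) }

/-- the formal antiderivative `I_t` with respect to `t∂_t`, where `t = t_d ^ d`. -/
def It {k : Type} [Field k] (d : ℕ) (f : LaurentSeries k) : LaurentSeries k :=
  { coeff := fun n => if n < 0 then ((d : k) * (n : k)⁻¹) • f.coeff n else 0
    isPWO_support' := f.isPWO_support'.mono (fun n hn => by
      simp only [Function.mem_support] at hn ⊢
      intro h; apply hn; split <;> simp [h]) }

namespace DMaux
open Polynomial

/-- Abstract interface: a ring `R` (to be `k((t))`) with a coefficient functional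
`cf n : R →+ k` behaving like the `n`-th Laurent coefficient. -/
structure CF (k R : Type) [Field k] [CommRing R] where
  cf : ℤ → R →+ k
  one_neg : ∀ n : ℤ, n < 0 → cf n 1 = 0
  one_zero : cf 0 1 = 1
  mulOG : ∀ {w w' : ℤ} {f g : R}, (∀ n < w, cf n f = 0) → (∀ n < w', cf n g = 0) →
    ∀ n < w + w', cf n (f * g) = 0
  mulBot : ∀ {w w' : ℤ} {f g : R}, (∀ n < w, cf n f = 0) → (∀ n < w', cf n g = 0) →
    cf (w + w') (f * g) = cf w f * cf w' g

variable {k R : Type} [Field k] [CommRing R] (Φ : CF k R)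

/-- all abstract coefficients below `w` vanish -/
def OGa (w : ℤ) (f : R) : Prop := ∀ n < w, Φ.cf n f = 0

/-- polynomial-level bound predicate -/
def Pg (w : ℤ) (p : R[X]) : Prop := ∀ m : ℕ, OGa Φ w (p.coeff m)

variable {Φ}

lemma OGa.mono {w w' : ℤ} (h : w' ≤ w) {f : R} (hf : OGa Φ w f) : OGa Φ w' f :=
  fun n hn => hf n (lt_of_lt_of_le hn h)

lemma OGa.zero (w : ℤ) : OGa Φ w (0 : R) := fun n _ => map_zero _

lemma OGa.add {w : ℤ} {f g : R} (hf : OGa Φ w f) (hg : OGa Φ w g) : OGa Φ w (f + g) := by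
  intro n hn; rw [map_add, hf n hn, hg n hn, add_zero]

lemma OGa.neg {w : ℤ} {f : R} (hf : OGa Φ w f) : OGa Φ w (-f) := by
  intro n hn; rw [map_neg, hf n hn, neg_zero]

lemma OGa.sub {w : ℤ} {f g : R} (hf : OGa Φ w f) (hg : OGa Φ w g) : OGa Φ w (f - g) := by
  rw [sub_eq_add_neg]; exact hf.add hg.neg

lemma OGa.one {w : ℤ} (hw : w ≤ 0) : OGa Φ w (1 : R) := by
  intro n hn; exact Φ.one_neg n (by omega)

lemma OGa.mul {w w' : ℤ} {f g : R} (hf : OGa Φ w f) (hg : OGa Φ w' g) :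
    OGa Φ (w + w') (f * g) := Φ.mulOG hf hg

lemma OGa.finsetSum {ι : Type*} {s : Finset ι} {w : ℤ} {f : ι → R}
    (h : ∀ i ∈ s, OGa Φ w (f i)) : OGa Φ w (∑ i ∈ s, f i) :=
  Finset.sum_induction f (OGa Φ w) (fun _ _ ha hb => ha.add hb) (OGa.zero w) h

lemma OGa.intCast (z : ℤ) : OGa Φ 0 ((z : ℤ) : R) := by
  intro n hn
  have h1 : ((z : ℤ) : R) = z • (1 : R) := by rw [zsmul_eq_mul, mul_one]
  rw [h1, map_zsmul, Φ.one_neg n hn, smul_zero]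

variable {w w' : ℤ}

lemma Pg.mono (h : w' ≤ w) {p : R[X]} (hp : Pg Φ w p) : Pg Φ w' p := fun m => (hp m).mono h

lemma Pg.zero : Pg Φ w (0 : R[X]) := by
  intro m; rw [Polynomial.coeff_zero]; exact OGa.zero w

lemma Pg.one (hw : w ≤ 0) : Pg Φ w (1 : R[X]) := by
  intro m
  rw [Polynomial.coeff_one]
  split
  · exact OGa.one hw
  · exact OGa.zero w

lemma Pg.add {p q : R[X]} (hp : Pg Φ w p) (hq : Pg Φ w q) : Pg Φ w (p + q) := by
  intro m; rw [Polynomial.coeff_add]; exact (hp m).add (hq m)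

lemma Pg.neg {p : R[X]} (hp : Pg Φ w p) : Pg Φ w (-p) := by
  intro m; rw [Polynomial.coeff_neg]; exact (hp m).neg

lemma Pg.mul {p q : R[X]} (hp : Pg Φ w p) (hq : Pg Φ w' q) : Pg Φ (w + w') (p * q) := by
  intro m
  rw [Polynomial.coeff_mul]
  exact OGa.finsetSum (fun x _ => (hp x.1).mul (hq x.2))

lemma Pg.finsetSum {ι : Type*} {s : Finset ι} {f : ι → R[X]}
    (h : ∀ i ∈ s, Pg Φ w (f i)) : Pg Φ w (∑ i ∈ s, f i) :=
  Finset.sum_induction f (Pg Φ w) (fun _ _ ha hb => ha.add hb) Pg.zero h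

lemma Pg.prod {ι : Type*} {s : Finset ι} {wt : ι → ℤ} {f : ι → R[X]}
    (hw : ∀ i ∈ s, wt i ≤ 0) (h : ∀ i ∈ s, Pg Φ (wt i) (f i)) :
    Pg Φ (∑ i ∈ s, wt i) (∏ i ∈ s, f i) := by
  classical
  induction s using Finset.cons_induction with
  | empty =>
      rw [Finset.sum_empty, Finset.prod_empty]
      exact Pg.one le_rfl
  | cons a s ha ih =>
      rw [Finset.sum_cons, Finset.prod_cons]
      exact (h a (Finset.mem_cons_self a s)).mul
        (ih (fun i hi => hw i (Finset.mem_cons_of_mem hi))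
            (fun i hi => h i (Finset.mem_cons_of_mem hi)))

lemma Pg.C {f : R} (hf : OGa Φ w f) : Pg Φ w (Polynomial.C f) := by
  intro m
  rw [Polynomial.coeff_C]
  split
  · exact hf
  · exact OGa.zero w

lemma Pg.linear (hw : w ≤ 0) {f : R} (hf : OGa Φ w f) :
    Pg Φ w (Polynomial.X - Polynomial.C f) := by
  intro m
  match m with
  | 0 =>
      rw [Polynomial.coeff_sub, Polynomial.coeff_X_zero, Polynomial.coeff_C, if_pos rfl,
        zero_sub]
      exact hf.neg
  | 1 =>
      rw [Polynomial.coeff_sub, Polynomial.coeff_X_one, Polynomial.coeff_C,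
        if_neg (by omega), sub_zero]
      exact OGa.one hw
  | (m + 2) =>
      rw [Polynomial.coeff_sub, Polynomial.coeff_X, Polynomial.coeff_C,
        if_neg (by omega), if_neg (by omega), sub_zero]
      exact OGa.zero w

/-- bottom coefficient of a product of polynomials -/
lemma coeff_mul_bot {p q : R[X]} (hp : Pg Φ w p) (hq : Pg Φ w' q) (m : ℕ) :
    Φ.cf (w + w') ((p * q).coeff m) =
      ∑ x ∈ Finset.HasAntidiagonal.antidiagonal m, Φ.cf w (p.coeff x.1) * Φ.cf w' (q.coeff x.2) := by
  rw [Polynomial.coeff_mul, map_sum]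
  exact Finset.sum_congr rfl (fun x _ => Φ.mulBot (hp x.1) (hq x.2))

/-- The key product lemma for `∏ (X - C fᵢ)` with "purely polar" `fᵢ`. -/
lemma prodl (s : Multiset (R × ℤ))
    (hs : ∀ p ∈ s, p.2 < 0 ∧ OGa Φ p.2 p.1) :
    Pg Φ ((s.map Prod.snd).sum) ((s.map fun p : R × ℤ => Polynomial.X - Polynomial.C p.1).prod) ∧
    Φ.cf ((s.map Prod.snd).sum)
        (((s.map fun p : R × ℤ => Polynomial.X - Polynomial.C p.1).prod).coeff 0)
      = (s.map fun p : R × ℤ => -(Φ.cf p.2 p.1)).prod ∧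
    ∀ i : ℕ, 1 ≤ i →
      OGa Φ ((s.map Prod.snd).sum + 1)
        (((s.map fun p : R × ℤ => Polynomial.X - Polynomial.C p.1).prod).coeff i) := by
  classical
  induction s using Multiset.induction_on with
  | empty =>
      refine ⟨?_, ?_, ?_⟩
      · simp only [Multiset.map_zero, Multiset.prod_zero, Multiset.sum_zero]
        exact Pg.one le_rfl
      · simp only [Multiset.map_zero, Multiset.prod_zero, Multiset.sum_zero,
          Polynomial.coeff_one, if_pos rfl]
        exact Φ.one_zero
      · intro i hi
        simp only [Multiset.map_zero, Multiset.prod_zero, Multiset.sum_zero, zero_add]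
        rw [Polynomial.coeff_one, if_neg (by omega)]
        exact OGa.zero 1
  | cons a s ih =>
      obtain ⟨ha2, haOG⟩ := hs a (Multiset.mem_cons_self a s)
      have hs' : ∀ p ∈ s, p.2 < 0 ∧ OGa Φ p.2 p.1 :=
        fun p hp => hs p (Multiset.mem_cons_of_mem hp)
      obtain ⟨ih1, ih2, ih3⟩ := ih hs'
      set O' : ℤ := (s.map Prod.snd).sum with hO'
      set P' : R[X] := (s.map fun p : R × ℤ => Polynomial.X - Polynomial.C p.1).prod with hP'
      have hmaps : ((a ::ₘ s).map Prod.snd).sum = a.2 + O' := by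
        rw [Multiset.map_cons, Multiset.sum_cons]
      have hmapp : ((a ::ₘ s).map fun p : R × ℤ => Polynomial.X - Polynomial.C p.1).prod =
          (Polynomial.X - Polynomial.C a.1) * P' := by
        rw [Multiset.map_cons, Multiset.prod_cons]
      have hlin : Pg Φ a.2 (Polynomial.X - Polynomial.C a.1) := Pg.linear (by omega) haOG
      have hPg : Pg Φ (a.2 + O') ((Polynomial.X - Polynomial.C a.1) * P') := hlin.mul ih1
      refine ⟨by rwa [hmaps, hmapp], ?_, ?_⟩
      · -- bottom coefficient value
        rw [hmaps, hmapp, Multiset.map_cons, Multiset.prod_cons]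
        rw [Polynomial.mul_coeff_zero]
        have hc0 : (Polynomial.X - Polynomial.C a.1).coeff 0 = -a.1 := by
          simp [Polynomial.coeff_X_zero]
        rw [hc0]
        rw [Φ.mulBot haOG.neg (ih1 0), map_neg, ih2]
      · -- higher coefficients vanish up to the bottom
        intro i hi
        rw [hmaps, hmapp]
        obtain ⟨j, rfl⟩ : ∃ j, i = j + 1 := ⟨i - 1, by omega⟩
        have hexp : ((Polynomial.X - Polynomial.C a.1) * P').coeff (j + 1) =
            P'.coeff j - a.1 * P'.coeff (j + 1) := by
          have hsm : (Polynomial.X - Polynomial.C a.1) * P' =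
              Polynomial.X * P' - Polynomial.C a.1 * P' := sub_mul _ _ _
          rw [hsm, Polynomial.coeff_sub, Polynomial.coeff_X_mul, Polynomial.coeff_C_mul]
        rw [hexp]
        have h2 : OGa Φ (a.2 + O' + 1) (a.1 * P'.coeff (j + 1)) := by
          have := haOG.mul (ih3 (j + 1) (by omega))
          exact this.mono (by omega)
        refine (OGa.sub ?_ h2)
        rcases Nat.eq_zero_or_pos j with hj | hj
        · subst hj; exact (ih1 0).mono (by omega)
        · exact (ih3 j (by omega)).mono (by omega)

/-- all coefficients below `w` vanish -/
def OG (w : ℤ) (f : LaurentSeries k) : Prop := ∀ n < w, f.coeff n = 0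

lemma OG.mono {w w' : ℤ} (h : w' ≤ w) {f : LaurentSeries k} (hf : OG w f) : OG w' f :=
  fun n hn => hf n (lt_of_lt_of_le hn h)

lemma OG.zero (w : ℤ) : OG w (0 : LaurentSeries k) := fun n _ => rfl

lemma OG.add {w : ℤ} {f g : LaurentSeries k} (hf : OG w f) (hg : OG w g) : OG w (f + g) := by
  intro n hn; rw [HahnSeries.coeff_add, hf n hn, hg n hn, add_zero]

lemma OG.neg {w : ℤ} {f : LaurentSeries k} (hf : OG w f) : OG w (-f) := by
  intro n hn; rw [HahnSeries.coeff_neg, hf n hn, neg_zero]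

lemma OG.sub {w : ℤ} {f g : LaurentSeries k} (hf : OG w f) (hg : OG w g) : OG w (f - g) := by
  rw [sub_eq_add_neg]; exact hf.add hg.neg

lemma OG.one {w : ℤ} (hw : w ≤ 0) : OG w (1 : LaurentSeries k) := by
  intro n hn
  rw [HahnSeries.coeff_one, if_neg]
  omega

lemma OG.mul {w w' : ℤ} {f g : LaurentSeries k} (hf : OG w f) (hg : OG w' g) :
    OG (w + w') (f * g) := by
  intro n hn
  rw [HahnSeries.coeff_mul]
  apply Finset.sum_eq_zero
  intro ij hij
  rw [Finset.mem_addAntidiagonal] at hij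
  obtain ⟨-, -, h3⟩ := hij
  by_cases hc : ij.1 < w
  · rw [hf _ hc, zero_mul]
  · have : ij.2 < w' := by omega
    rw [hg _ this, mul_zero]

lemma OG.finsetSum {ι : Type*} {s : Finset ι} {w : ℤ} {f : ι → LaurentSeries k}
    (h : ∀ i ∈ s, OG w (f i)) : OG w (∑ i ∈ s, f i) :=
  Finset.sum_induction f (OG w) (fun _ _ ha hb => ha.add hb) (OG.zero w) h

lemma hsum_coeff {ι : Type*} (s : Finset ι) (f : ι → LaurentSeries k) (n : ℤ) :
    (∑ i ∈ s, f i).coeff n = ∑ i ∈ s, (f i).coeff n := by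
  classical
  induction s using Finset.cons_induction with
  | empty => simp
  | cons a s ha ih => rw [Finset.sum_cons, Finset.sum_cons, HahnSeries.coeff_add, ih]

lemma mul_coeff_bot {w w' : ℤ} {f g : LaurentSeries k} (hf : OG w f) (hg : OG w' g) :
    (f * g).coeff (w + w') = f.coeff w * g.coeff w' := by
  rw [HahnSeries.coeff_mul]
  apply Finset.sum_eq_single (w, w')
  · intro b hb hne
    rw [Finset.mem_addAntidiagonal] at hb
    obtain ⟨hb1, hb2, hb3⟩ := hb
    rw [HahnSeries.mem_support] at hb1 hb2
    exfalso
    have h1 : ¬ b.1 < w := fun h => hb1 (hf _ h)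
    have h2 : ¬ b.2 < w' := fun h => hb2 (hg _ h)
    exact hne (Prod.ext (by omega) (by omega))
  · intro h
    by_contra hc
    apply h
    rw [Finset.mem_addAntidiagonal]
    exact ⟨(HahnSeries.mem_support _ _).2 (left_ne_zero_of_mul hc),
      (HahnSeries.mem_support _ _).2 (right_ne_zero_of_mul hc), rfl⟩

lemma OG.order {f : LaurentSeries k} (hf : f ≠ 0) : OG f.order f := by
  intro n hn; exact HahnSeries.coeff_eq_zero_of_lt_order hn

lemma OG_of_order_nonneg {f : LaurentSeries k} (h : f = 0 ∨ 0 ≤ f.order) : OG 0 f := by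
  rcases h with h | h
  · rw [h]; exact OG.zero 0
  · intro n hn; exact HahnSeries.coeff_eq_zero_of_lt_order (by omega)

lemma inv_OG {f : LaurentSeries k} (hf : f ≠ 0) (h0 : f.order = 0) : OG 0 f⁻¹ := by
  have hinv : f⁻¹ ≠ 0 := inv_ne_zero hf
  have : (f * f⁻¹).order = f.order + f⁻¹.order := HahnSeries.order_mul hf hinv
  rw [mul_inv_cancel₀ hf, HahnSeries.order_one, h0, zero_add] at this
  exact OG_of_order_nonneg (Or.inr (by omega))


section MatrixSide

variable {k R : Type} [Field k] [CommRing R] [Nontrivial R] {Φ : CF k R}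

lemma Finset.prod_multiset' {ι : Type*} (s : Finset ι) (f : ι → R[X]) :
    (∏ i ∈ s, f i) = (s.val.map f).prod := rfl

/-- Matrix-side coefficient estimates for `charpoly (diagonal ε + N)`. -/
lemma matrix_side {r : ℕ} (ε : Fin r → R) (N : Matrix (Fin r) (Fin r) R)
    (o : Fin r → ℤ) (cls : Fin r → Prop) [DecidablePred cls]
    (hcls : ∀ i, cls i → ε i = 0)
    (ho0 : ∀ i, cls i → o i = 0)
    (hneg : ∀ i, ¬ cls i → o i < 0)
    (hOG : ∀ i, OGa Φ (o i) (ε i))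
    (hbot : ∀ i, ¬ cls i → Φ.cf (o i) (ε i) ≠ 0)
    (hN : ∀ i j, OGa Φ 0 (N i j)) :
    (∀ m : ℕ, OGa Φ (∑ i, o i) (((Matrix.diagonal ε + N).charpoly).coeff m)) ∧
    Φ.cf (∑ i, o i) (((Matrix.diagonal ε + N).charpoly).coeff
        (Finset.univ.filter cls).card) ≠ 0 := by
  classical
  set M : Matrix (Fin r) (Fin r) R := Matrix.diagonal ε + N with hM
  set W : ℤ := ∑ i, o i with hW
  set T : Finset (Fin r) := Finset.univ.filter (fun i => ¬ cls i) with hT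
  set Tc : Finset (Fin r) := Finset.univ.filter cls with hTc
  set c : ℕ := Tc.card with hc
  have hoLE : ∀ i, o i ≤ 0 := by
    intro i
    by_cases h : cls i
    · rw [ho0 i h]
    · exact le_of_lt (hneg i h)
  -- entries of the char matrix
  have hdiagM : ∀ i, M i i = ε i + N i i := by
    intro i
    rw [hM, Matrix.add_apply, Matrix.diagonal_apply_eq]
  have hoffM : ∀ i j, i ≠ j → M i j = N i j := by
    intro i j hij
    rw [hM, Matrix.add_apply, Matrix.diagonal_apply_ne _ hij, zero_add]
  have hdOG : ∀ i, OGa Φ (o i) (ε i + N i i) :=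
    fun i => (hOG i).add ((hN i i).mono (hoLE i))
  have cmE : ∀ (σ : Equiv.Perm (Fin r)) (i : Fin r),
      Pg Φ (if σ i = i then o i else 0) (M.charmatrix (σ i) i) := by
    intro σ i
    by_cases h : σ i = i
    · rw [if_pos h, h, Matrix.charmatrix_apply_eq, hdiagM i]
      exact Pg.linear (hoLE i) (hdOG i)
    · rw [if_neg h, Matrix.charmatrix_apply_ne _ _ _ h, hoffM _ _ h]
      exact (Pg.C (hN _ i)).neg
  have hwle : ∀ σ : Equiv.Perm (Fin r), W ≤ ∑ i, (if σ i = i then o i else 0) := by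
    intro σ
    rw [hW]
    apply Finset.sum_le_sum
    intro i _
    by_cases h : σ i = i
    · rw [if_pos h]
    · rw [if_neg h]; exact hoLE i
  have hterm : ∀ σ : Equiv.Perm (Fin r),
      Pg Φ W ((↑↑(Equiv.Perm.sign σ) : R[X]) * ∏ i, M.charmatrix (σ i) i) := by
    intro σ
    have h1 : Pg Φ 0 ((↑↑(Equiv.Perm.sign σ) : R[X])) := by
      rw [← Polynomial.C_eq_intCast]
      exact Pg.C (OGa.intCast _)
    have h2 : Pg Φ (∑ i, (if σ i = i then o i else 0)) (∏ i, M.charmatrix (σ i) i) :=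
      Pg.prod (fun i _ => by split <;> [exact hoLE i; rfl]) (fun i _ => cmE σ i)
    have h3 := h1.mul h2
    rw [zero_add] at h3
    exact h3.mono (hwle σ)
  have hdet : M.charpoly = ∑ σ : Equiv.Perm (Fin r),
      (↑↑(Equiv.Perm.sign σ) : R[X]) * ∏ i, M.charmatrix (σ i) i := by
    show M.charmatrix.det = _
    rw [Matrix.det_apply']
  have hPgCh : ∀ m : ℕ, OGa Φ W (M.charpoly.coeff m) := by
    rw [hdet]
    exact fun m => (Pg.finsetSum (fun σ _ => hterm σ)) m
  refine ⟨hPgCh, ?_⟩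
  -- the `T`-part linear product and its properties (independent of σ)
  set sP : R[X] := ∏ i ∈ T, (Polynomial.X - Polynomial.C (ε i + N i i)) with hsPdef
  have hWT : (((T.val.map (fun i => ((ε i + N i i), o i))).map Prod.snd).sum) = W := by
    rw [Multiset.map_map]
    have h5 : ∑ i ∈ T, o i = W := by
      rw [hW, hT]
      rw [← Finset.sum_filter_add_sum_filter_not Finset.univ cls o]
      have hz : ∑ i ∈ Finset.univ.filter cls, o i = 0 :=
        Finset.sum_eq_zero (fun i hi => ho0 i (Finset.mem_filter.1 hi).2)
      rw [hz, zero_add]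
    rw [← h5]
    rfl
  have hprodl := prodl (Φ := Φ) (T.val.map (fun i => ((ε i + N i i), o i))) ?hyp
  case hyp =>
    intro p hp
    rw [Multiset.mem_map] at hp
    obtain ⟨i, hi, rfl⟩ := hp
    have hiT : ¬ cls i := (Finset.mem_filter.1 (show i ∈ T from hi)).2
    exact ⟨hneg i hiT, hdOG i⟩
  rw [hWT] at hprodl
  have hmm : ((T.val.map (fun i => ((ε i + N i i), o i))).map
      (fun p : R × ℤ => Polynomial.X - Polynomial.C p.1)).prod = sP := by
    rw [Multiset.map_map, hsPdef]
    rfl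
  rw [hmm] at hprodl
  obtain ⟨hPgS, hbotS, hhiS⟩ := hprodl
  have hbotSne : Φ.cf W (sP.coeff 0) ≠ 0 := by
    rw [hbotS]
    apply Multiset.prod_ne_zero
    intro h0
    rw [Multiset.map_map, Multiset.mem_map] at h0
    obtain ⟨i, hi, hival⟩ := h0
    have hiT : ¬ cls i := (Finset.mem_filter.1 (show i ∈ T from hi)).2
    apply hbot i hiT
    have hNz : Φ.cf (o i) (N i i) = 0 := hN i i (o i) (hneg i hiT)
    have h6 := hival.symm
    simp only [Function.comp_apply, map_add, hNz, add_zero] at h6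
    exact neg_eq_zero.1 h6.symm
  -- a uniform formula for terms of permutations fixing all of `T`
  have hterm_fix : ∀ σ : Equiv.Perm (Fin r), (∀ i, ¬ cls i → σ i = i) →
      Φ.cf W (((↑↑(Equiv.Perm.sign σ) : R[X]) * ∏ i, M.charmatrix (σ i) i).coeff c) =
        Φ.cf 0 ((Equiv.Perm.sign σ : ℤ) : R) *
          (Φ.cf 0 ((∏ i ∈ Tc, M.charmatrix (σ i) i).coeff c) * Φ.cf W (sP.coeff 0)) := by
    intro σ hfix
    have hsplit : (∏ i, M.charmatrix (σ i) i) =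
        (∏ i ∈ Tc, M.charmatrix (σ i) i) * sP := by
      rw [hsPdef, hTc, hT]
      rw [← Finset.prod_filter_mul_prod_filter_not Finset.univ cls
        (fun i => M.charmatrix (σ i) i)]
      congr 1
      apply Finset.prod_congr rfl
      intro i hi
      have hiT : ¬ cls i := (Finset.mem_filter.1 hi).2
      have hfi : σ i = i := hfix i hiT
      rw [hfi, Matrix.charmatrix_apply_eq, hdiagM i]
    set u : R[X] := ∏ i ∈ Tc, M.charmatrix (σ i) i with hu
    have hPgU : Pg Φ 0 u := by
      rw [hu]
      have := Pg.prod (Φ := Φ) (s := Tc) (wt := fun _ => 0)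
        (f := fun i => M.charmatrix (σ i) i) (fun i _ => le_rfl) ?_
      · rwa [Finset.sum_const, smul_zero] at this
      · intro i hi
        have hci : cls i := (Finset.mem_filter.1 hi).2
        show Pg Φ 0 (M.charmatrix (σ i) i)
        by_cases h : σ i = i
        · rw [h, Matrix.charmatrix_apply_eq, hdiagM i]
          have : OGa Φ 0 (ε i + N i i) := by
            rw [hcls i hci, zero_add]
            exact hN i i
          exact Pg.linear le_rfl this
        · rw [Matrix.charmatrix_apply_ne _ _ _ h, hoffM _ _ h]
          exact (Pg.C (hN _ i)).neg
    have hcast : ((↑↑(Equiv.Perm.sign σ) : R[X]) * ∏ i, M.charmatrix (σ i) i).coeff c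
        = ((Equiv.Perm.sign σ : ℤ) : R) * ((u * sP).coeff c) := by
      rw [hsplit, ← Polynomial.C_eq_intCast, Polynomial.coeff_C_mul]
    rw [hcast]
    have h4 : Pg Φ W (u * sP) := by
      have := hPgU.mul hPgS
      rwa [zero_add] at this
    have hval : Φ.cf W (((Equiv.Perm.sign σ : ℤ) : R) * ((u * sP).coeff c)) =
        Φ.cf 0 ((Equiv.Perm.sign σ : ℤ) : R) * Φ.cf W ((u * sP).coeff c) := by
      have := Φ.mulBot (OGa.intCast (Equiv.Perm.sign σ : ℤ)) (h4 c)
      rwa [zero_add] at this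
    rw [hval]
    congr 1
    have h0 := coeff_mul_bot hPgU hPgS c
    rw [zero_add] at h0
    rw [h0]
    rw [Finset.sum_eq_single_of_mem ((c, 0) : ℕ × ℕ)
      (Finset.HasAntidiagonal.mem_antidiagonal.2 (by omega))]
    intro b hb hbne
    rw [Finset.HasAntidiagonal.mem_antidiagonal] at hb
    have hb2 : 1 ≤ b.2 := by
      rcases Nat.eq_zero_or_pos b.2 with h | h
      · exfalso; apply hbne; have : b.1 = c := by omega
        exact Prod.ext this h
      · exact h
    rw [hhiS b.2 hb2 W (by omega), mul_zero]
  -- now the value of the coefficient at (c, W)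
  rw [hdet]
  rw [Polynomial.finset_sum_coeff, map_sum]
  -- only the identity permutation contributes
  rw [Finset.sum_eq_single_of_mem (1 : Equiv.Perm (Fin r)) (Finset.mem_univ _) ?side]
  case side =>
    -- vanishing of all other terms
    intro σ _ hσ
    by_cases hfix : ∀ i, ¬ cls i → σ i = i
    case neg =>
      -- some non-class point is moved: strict estimate
      push_neg at hfix
      obtain ⟨i₁, hi₁c, hi₁m⟩ := hfix
      have hlt : W < ∑ i, (if σ i = i then o i else 0) := by
        rw [hW]
        apply Finset.sum_lt_sum
        · intro i _
          by_cases h : σ i = i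
          · rw [if_pos h]
          · rw [if_neg h]; exact hoLE i
        · exact ⟨i₁, Finset.mem_univ _, by rw [if_neg hi₁m]; exact hneg i₁ hi₁c⟩
      have h1 : Pg Φ 0 ((↑↑(Equiv.Perm.sign σ) : R[X])) := by
        rw [← Polynomial.C_eq_intCast]
        exact Pg.C (OGa.intCast _)
      have h2 : Pg Φ (∑ i, (if σ i = i then o i else 0)) (∏ i, M.charmatrix (σ i) i) :=
        Pg.prod (fun i _ => by split <;> [exact hoLE i; rfl]) (fun i _ => cmE σ i)
      have h3 := h1.mul h2
      rw [zero_add] at h3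
      exact (h3 c) W hlt
    case pos =>
      rw [hterm_fix σ hfix]
      -- for σ ≠ 1 fixing T, some class point is moved, so `u.coeff c = 0`
      have hmove : ∃ j, cls j ∧ σ j ≠ j := by
        by_contra hall
        push_neg at hall
        apply hσ
        apply Equiv.ext
        intro i
        rw [Equiv.Perm.one_apply]
        by_cases h : cls i
        · exact hall i h
        · exact hfix i h
      obtain ⟨j₁, hj₁c, hj₁m⟩ := hmove
      have hj₁Tc : j₁ ∈ Tc := by rw [hTc, Finset.mem_filter]; exact ⟨Finset.mem_univ _, hj₁c⟩
      have hdeg : (∏ i ∈ Tc, M.charmatrix (σ i) i).natDegree < c := by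
        have h1 : (∏ i ∈ Tc, M.charmatrix (σ i) i).natDegree ≤
            ∑ i ∈ Tc, (M.charmatrix (σ i) i).natDegree :=
          Polynomial.natDegree_prod_le _ _
        have hdegj : (M.charmatrix (σ j₁) j₁).natDegree = 0 := by
          rw [Matrix.charmatrix_apply_ne _ _ _ hj₁m]
          rw [Polynomial.natDegree_neg, Polynomial.natDegree_C]
        have hdegle : ∀ i ∈ Tc, (M.charmatrix (σ i) i).natDegree ≤ 1 := by
          intro i _
          by_cases h : σ i = i
          · rw [h, Matrix.charmatrix_apply_eq]
            exact le_of_eq (Polynomial.natDegree_X_sub_C _)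
          · rw [Matrix.charmatrix_apply_ne _ _ _ h, Polynomial.natDegree_neg,
              Polynomial.natDegree_C]
            omega
        have h2 : ∑ i ∈ Tc, (M.charmatrix (σ i) i).natDegree ≤ c - 1 := by
          rw [← Finset.sum_erase_add _ _ hj₁Tc, hdegj, add_zero]
          calc ∑ i ∈ Tc.erase j₁, (M.charmatrix (σ i) i).natDegree
              ≤ ∑ i ∈ Tc.erase j₁, 1 :=
                Finset.sum_le_sum (fun i hi => hdegle i (Finset.mem_of_mem_erase hi))
            _ = (Tc.erase j₁).card := by rw [Finset.sum_const, smul_eq_mul, mul_one]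
            _ = c - 1 := by rw [Finset.card_erase_of_mem hj₁Tc, hc]
        have hcpos : 0 < c := by
          rw [hc]
          exact Finset.card_pos.2 ⟨j₁, hj₁Tc⟩
        omega
      rw [Polynomial.coeff_eq_zero_of_natDegree_lt hdeg, map_zero, zero_mul, mul_zero]
  -- value of the identity term
  · rw [hterm_fix 1 (fun i _ => rfl)]
    have hsign : ((Equiv.Perm.sign (1 : Equiv.Perm (Fin r)) : ℤ) : R) = 1 := by
      simp
    rw [hsign, Φ.one_zero, one_mul]
    apply mul_ne_zero _ hbotSne
    -- the class part for σ = 1 is a monic polynomial of degree c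
    have huTc : (∏ i ∈ Tc, M.charmatrix ((1 : Equiv.Perm (Fin r)) i) i) =
        ∏ i ∈ Tc, (Polynomial.X - Polynomial.C (N i i)) := by
      apply Finset.prod_congr rfl
      intro i hi
      have hci : cls i := (Finset.mem_filter.1 hi).2
      show M.charmatrix i i = _
      rw [Matrix.charmatrix_apply_eq, hdiagM i, hcls i hci, zero_add]
    rw [huTc]
    have hmon : ∀ i ∈ Tc, (Polynomial.X - Polynomial.C (N i i)).Monic :=
      fun i _ => Polynomial.monic_X_sub_C _
    have hdeg : (∏ i ∈ Tc, (Polynomial.X - Polynomial.C (N i i))).natDegree = c := by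
      rw [Polynomial.natDegree_prod_of_monic _ _ hmon]
      rw [hc]
      calc ∑ i ∈ Tc, (Polynomial.X - Polynomial.C (N i i)).natDegree
          = ∑ _i ∈ Tc, 1 := Finset.sum_congr rfl
            (fun i _ => Polynomial.natDegree_X_sub_C _)
        _ = Tc.card := by rw [Finset.sum_const, smul_eq_mul, mul_one]
    have hco : (∏ i ∈ Tc, (Polynomial.X - Polynomial.C (N i i))).coeff c = 1 := by
      have := (Polynomial.monic_prod_of_monic Tc _ hmon).coeff_natDegree
      rwa [hdeg] at this
    rw [hco, Φ.one_zero]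
    exact one_ne_zero

end MatrixSide

section Generic

variable {S : Type} [CommRing S]

lemma charmatrix_conj {n : ℕ} (M P Pinv : Matrix (Fin n) (Fin n) S)
    (h2 : Pinv * P = 1) :
    (Pinv * M * P).charmatrix =
      (Polynomial.C : S →+* Polynomial S).mapMatrix Pinv * M.charmatrix *
        (Polynomial.C : S →+* Polynomial S).mapMatrix P := by
  have e1 : ∀ A B : Matrix (Fin n) (Fin n) S,
      (Polynomial.C : S →+* Polynomial S).mapMatrix (A * B) =
        (Polynomial.C : S →+* Polynomial S).mapMatrix A *
        (Polynomial.C : S →+* Polynomial S).mapMatrix B :=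
    fun A B => map_mul _ A B
  have hsc : ∀ Q : Matrix (Fin n) (Fin n) (Polynomial S),
      Matrix.scalar (Fin n) Polynomial.X * Q = Q * Matrix.scalar (Fin n) Polynomial.X :=
    fun Q => (Matrix.scalar_commute Polynomial.X (fun r => Commute.all _ _) Q).eq
  have lhs : (Pinv * M * P).charmatrix =
      Matrix.scalar (Fin n) Polynomial.X -
        (Polynomial.C : S →+* Polynomial S).mapMatrix (Pinv * M * P) := rfl
  have hm : M.charmatrix = Matrix.scalar (Fin n) Polynomial.X -
      (Polynomial.C : S →+* Polynomial S).mapMatrix M := rfl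
  rw [lhs, hm, e1, e1, mul_sub, sub_mul]
  congr 1
  rw [← hsc, mul_assoc, ← e1, h2, map_one, mul_one]

lemma charpoly_conj {n : ℕ} (M P Pinv : Matrix (Fin n) (Fin n) S)
    (h2 : Pinv * P = 1) :
    (Pinv * M * P).charpoly = M.charpoly := by
  show ((Pinv * M * P).charmatrix).det = M.charmatrix.det
  rw [charmatrix_conj M P Pinv h2, Matrix.det_mul, Matrix.det_mul]
  have hone : ((Polynomial.C : S →+* Polynomial S).mapMatrix Pinv).det *
      ((Polynomial.C : S →+* Polynomial S).mapMatrix P).det = 1 := by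
    rw [← Matrix.det_mul, ← map_mul, h2, map_one, Matrix.det_one]
  calc ((Polynomial.C : S →+* Polynomial S).mapMatrix Pinv).det * M.charmatrix.det *
        ((Polynomial.C : S →+* Polynomial S).mapMatrix P).det
      = M.charmatrix.det * (((Polynomial.C : S →+* Polynomial S).mapMatrix Pinv).det *
        ((Polynomial.C : S →+* Polynomial S).mapMatrix P).det) := by ring
    _ = M.charmatrix.det := by rw [hone, mul_one]

lemma charpoly_shift {n : ℕ} (M : Matrix (Fin n) (Fin n) S) (b : S) :
    (M - b • 1).charpoly =
      Polynomial.eval₂RingHom Polynomial.C (Polynomial.X + Polynomial.C b) M.charpoly := by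
  have hRHS : Polynomial.eval₂RingHom Polynomial.C (Polynomial.X + Polynomial.C b) M.charpoly
      = ((Polynomial.eval₂RingHom Polynomial.C
          (Polynomial.X + Polynomial.C b)).mapMatrix M.charmatrix).det :=
    RingHom.map_det _ _
  rw [hRHS]
  show ((M - b • 1).charmatrix).det = _
  congr 1
  refine Matrix.ext (fun i j => ?_)
  rw [RingHom.mapMatrix_apply, Matrix.map_apply]
  by_cases hij : i = j
  · subst hij
    rw [Matrix.charmatrix_apply_eq, Matrix.charmatrix_apply_eq]
    have hentry : (M - b • 1) i i = M i i - b := by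
      rw [Matrix.sub_apply, Matrix.smul_apply, Matrix.one_apply_eq, smul_eq_mul, mul_one]
    rw [hentry]
    have hmap : (Polynomial.eval₂RingHom Polynomial.C (Polynomial.X + Polynomial.C b))
        (Polynomial.X - Polynomial.C (M i i)) =
        (Polynomial.X + Polynomial.C b) - Polynomial.C (M i i) := by
      rw [map_sub, Polynomial.coe_eval₂RingHom, Polynomial.eval₂_X, Polynomial.eval₂_C]
    rw [hmap, map_sub]
    ring
  · rw [Matrix.charmatrix_apply_ne _ _ _ hij, Matrix.charmatrix_apply_ne _ _ _ hij]
    have hentry : (M - b • 1) i j = M i j := by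
      rw [Matrix.sub_apply, Matrix.smul_apply, Matrix.one_apply_ne hij, smul_zero, sub_zero]
    rw [hentry, map_neg, Polynomial.coe_eval₂RingHom, Polynomial.eval₂_C]

lemma evalCharpoly {n : ℕ} (M : Matrix (Fin n) (Fin n) S) (x : S) :
    M.charpoly.eval x = (x • (1 : Matrix (Fin n) (Fin n) S) - M).det := by
  have h1 : M.charpoly.eval x = (Polynomial.evalRingHom x) M.charmatrix.det := rfl
  rw [h1, RingHom.map_det]
  congr 1
  ext i j
  rw [RingHom.mapMatrix_apply, Matrix.map_apply]
  by_cases hij : i = j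
  · subst hij
    rw [Matrix.charmatrix_apply_eq, Matrix.sub_apply, Matrix.smul_apply, Matrix.one_apply_eq,
      smul_eq_mul, mul_one, Polynomial.coe_evalRingHom, Polynomial.eval_sub, Polynomial.eval_X,
      Polynomial.eval_C]
  · rw [Matrix.charmatrix_apply_ne _ _ _ hij, Matrix.sub_apply, Matrix.smul_apply,
      Matrix.one_apply_ne hij, smul_zero, zero_sub, Polynomial.coe_evalRingHom,
      Polynomial.eval_neg, Polynomial.eval_C]

lemma eq_prod_shift {K : Type} [Field K] (p : Polynomial K) (hmonic : p.Monic)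
    (hsplit : (p.map (RingHom.id K)).Splits) (b : K) :
    Polynomial.eval₂RingHom Polynomial.C (Polynomial.X + Polynomial.C b) p =
      ((p.roots.map (fun a => a - b)).map
        (fun a => Polynomial.X - Polynomial.C a)).prod := by
  conv_lhs => rw [(show p.Splits by simpa using hsplit).eq_prod_roots_of_monic hmonic]
  rw [map_multiset_prod, Multiset.map_map, Multiset.map_map]
  congr 1
  apply Multiset.map_congr rfl
  intro a _
  show Polynomial.eval₂RingHom Polynomial.C (Polynomial.X + Polynomial.C b)
      (Polynomial.X - Polynomial.C a) = Polynomial.X - Polynomial.C (a - b)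
  rw [map_sub, Polynomial.coe_eval₂RingHom, Polynomial.eval₂_X, Polynomial.eval₂_C, map_sub]
  ring

end Generic

section Laurent

variable {k : Type} [Field k]

/-- the coefficient functional as an additive homomorphism -/
def coeffHom (n : ℤ) : LaurentSeries k →+ k where
  toFun f := f.coeff n
  map_zero' := rfl
  map_add' _ _ := HahnSeries.coeff_add

/-- Laurent series instantiation of the abstract coefficient interface -/
def LCF : CF k (LaurentSeries k) where
  cf := coeffHom
  one_neg := fun n hn => by
    show (1 : LaurentSeries k).coeff n = 0
    rw [HahnSeries.coeff_one, if_neg (by omega)]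
  one_zero := by
    show (1 : LaurentSeries k).coeff 0 = 1
    rw [HahnSeries.coeff_one, if_pos rfl]
  mulOG := fun {w w' f g} hf hg => OG.mul hf hg
  mulBot := fun {w w' f g} hf hg => mul_coeff_bot hf hg

lemma OGa_LCF {w : ℤ} {f : LaurentSeries k} : OGa (LCF (k := k)) w f ↔ OG w f := Iff.rfl

lemma negPart_coeff (f : LaurentSeries k) (n : ℤ) :
    (negPart f).coeff n = if n < 0 then f.coeff n else 0 := rfl

lemma negPart_eq {α δ : LaurentSeries k} (hδ : ∀ n : ℤ, 0 ≤ n → δ.coeff n = 0)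
    (h : OG 0 (α - δ)) : negPart α = δ := by
  apply HahnSeries.ext
  funext n
  rw [negPart_coeff]
  split
  case isTrue hn =>
    have h2 := h n hn
    rw [HahnSeries.coeff_sub] at h2
    exact sub_eq_zero.mp h2
  case isFalse hn => exact (hδ n (by omega)).symm

set_option maxHeartbeats 2000000 in
/-- every eigenvalue of `diagonal δ + N` differs from some `δ i` by an integral series -/
lemma core_sub {r : ℕ} (δ : Fin r → LaurentSeries k)
    (N : Matrix (Fin r) (Fin r) (LaurentSeries k))
    (hδ : ∀ i (n : ℤ), 0 ≤ n → (δ i).coeff n = 0) (hN : ∀ i j, OG 0 (N i j))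
    {α : LaurentSeries k} (hα : ((Matrix.diagonal δ + N).charpoly).IsRoot α) :
    ∃ i, OG 0 (α - δ i) := by
  classical
  set M : Matrix (Fin r) (Fin r) (LaurentSeries k) := Matrix.diagonal δ + N with hM
  have hdet : (α • (1 : Matrix (Fin r) (Fin r) (LaurentSeries k)) - M).det = 0 := by
    rw [← evalCharpoly]; exact hα
  obtain ⟨x, hx0, hxv⟩ := (Matrix.exists_mulVec_eq_zero_iff).mpr hdet
  obtain ⟨i₁, hi₁⟩ : ∃ i, x i ≠ 0 := by
    by_contra hc; push_neg at hc; exact hx0 (funext hc)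
  set S : Finset (Fin r) := Finset.univ.filter (fun i => x i ≠ 0) with hS
  have hSne : S.Nonempty := ⟨i₁, by rw [hS, Finset.mem_filter]; exact ⟨Finset.mem_univ _, hi₁⟩⟩
  obtain ⟨i₀, hi₀S, hi₀min⟩ := Finset.exists_min_image S (fun i => (x i).order) hSne
  have hx₀ : x i₀ ≠ 0 := (Finset.mem_filter.1 hi₀S).2
  set u : LaurentSeries k := HahnSeries.single (-(x i₀).order) 1 with hu
  have hu0 : u ≠ 0 := HahnSeries.single_ne_zero one_ne_zero
  have huord : u.order = -(x i₀).order := HahnSeries.order_single one_ne_zero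
  set y : Fin r → LaurentSeries k := fun j => u * x j with hy
  have hyO : ∀ j, OG 0 (y j) := by
    intro j
    by_cases hxj : x j = 0
    · have : y j = 0 := by rw [hy]; show u * x j = 0; rw [hxj, mul_zero]
      rw [this]; exact OG.zero 0
    · apply OG_of_order_nonneg; right
      have hyj : y j = u * x j := rfl
      rw [hyj, HahnSeries.order_mul hu0 hxj, huord]
      have := hi₀min j (by rw [hS, Finset.mem_filter]; exact ⟨Finset.mem_univ _, hxj⟩)
      omega
  have hy₀ : y i₀ ≠ 0 := mul_ne_zero hu0 hx₀
  have hyord : (y i₀).order = 0 := by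
    show (u * x i₀).order = 0
    rw [HahnSeries.order_mul hu0 hx₀, huord]
    omega
  have hyv : ∀ i, ((α • (1 : Matrix (Fin r) (Fin r) (LaurentSeries k)) - M).mulVec y) i = 0 := by
    intro i
    show ∑ j, (α • (1 : Matrix (Fin r) (Fin r) (LaurentSeries k)) - M) i j * y j = 0
    have hterm : ∀ j, (α • (1 : Matrix (Fin r) (Fin r) (LaurentSeries k)) - M) i j * y j
        = u * ((α • (1 : Matrix (Fin r) (Fin r) (LaurentSeries k)) - M) i j * x j) := by
      intro j
      show (α • (1 : Matrix (Fin r) (Fin r) (LaurentSeries k)) - M) i j * (u * x j) = _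
      exact mul_left_comm _ u (x j)
    rw [Finset.sum_congr rfl (fun j _ => hterm j), ← Finset.mul_sum]
    have hzero : ∑ j, (α • (1 : Matrix (Fin r) (Fin r) (LaurentSeries k)) - M) i j * x j = 0 :=
      congrFun hxv i
    rw [hzero, mul_zero]
  have h0 := hyv i₀
  rw [show ((α • (1 : Matrix (Fin r) (Fin r) (LaurentSeries k)) - M).mulVec y) i₀
      = ∑ j, (α • (1 : Matrix (Fin r) (Fin r) (LaurentSeries k)) - M) i₀ j * y j from rfl] at h0
  have hentry : ∀ j, (α • (1 : Matrix (Fin r) (Fin r) (LaurentSeries k)) - M) i₀ j * y j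
      = (if j = i₀ then α * y i₀ - δ i₀ * y i₀ else 0) - N i₀ j * y j := by
    intro j
    rw [Matrix.sub_apply, Matrix.smul_apply, Matrix.one_apply, hM, Matrix.add_apply]
    by_cases h : i₀ = j
    · subst h
      rw [if_pos rfl, if_pos rfl, Matrix.diagonal_apply_eq, smul_eq_mul, mul_one]
      rw [sub_mul (α) (δ i₀ + N i₀ i₀) (y i₀), add_mul (δ i₀) (N i₀ i₀) (y i₀)]
      rw [sub_add_eq_sub_sub]
    · rw [if_neg h, if_neg (fun hh => h hh.symm), Matrix.diagonal_apply_ne _ h, smul_zero,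
        zero_add]
      rw [show ((0:LaurentSeries k) - N i₀ j) * y j = -(N i₀ j) * y j by rw [zero_sub]]
      rw [neg_mul (N i₀ j) (y j), zero_sub]
  rw [Finset.sum_congr rfl (fun j _ => hentry j), Finset.sum_sub_distrib,
    Finset.sum_ite_eq' Finset.univ i₀ (fun _ => α * y i₀ - δ i₀ * y i₀),
    if_pos (Finset.mem_univ _)] at h0
  -- h0 : (α * y i₀ - δ i₀ * y i₀) - ∑ j, N i₀ j * y j = 0
  have h2 : (α - δ i₀) * y i₀ = (N.mulVec y) i₀ := by
    show _ = ∑ j, N i₀ j * y j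
    rw [sub_mul α (δ i₀) (y i₀)]
    exact sub_eq_zero.mp h0
  have key : α - δ i₀ = (N.mulVec y) i₀ * (y i₀)⁻¹ := by
    calc α - δ i₀ = (α - δ i₀) * ((y i₀) * (y i₀)⁻¹) := by
          rw [mul_inv_cancel₀ hy₀, mul_one]
      _ = ((α - δ i₀) * y i₀) * (y i₀)⁻¹ := by rw [← mul_assoc]
      _ = (N.mulVec y) i₀ * (y i₀)⁻¹ := by rw [h2]
  have hNv : OG 0 ((N.mulVec y) i₀) := by
    show OG 0 (∑ j, N i₀ j * y j)
    apply OG.finsetSum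
    intro j _
    have := (hN i₀ j).mul (hyO j)
    rwa [add_zero] at this
  have hinv : OG 0 (y i₀)⁻¹ := inv_OG hy₀ hyord
  refine ⟨i₀, ?_⟩
  rw [key]
  have := hNv.mul hinv
  rwa [add_zero] at this

/-- each `δ i` is realized by some eigenvalue, up to an integral series -/
lemma core_sup {r : ℕ} (δ : Fin r → LaurentSeries k)
    (N : Matrix (Fin r) (Fin r) (LaurentSeries k))
    (hδ : ∀ i (n : ℤ), 0 ≤ n → (δ i).coeff n = 0) (hN : ∀ i j, OG 0 (N i j))
    (hsplit : (((Matrix.diagonal δ + N).charpoly).map (RingHom.id (LaurentSeries k))).Splits)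
    (i₀ : Fin r) :
    ∃ α, ((Matrix.diagonal δ + N).charpoly).IsRoot α ∧ OG 0 (α - δ i₀) := by
  classical
  by_contra hcon
  push_neg at hcon
  set p : Polynomial (LaurentSeries k) := (Matrix.diagonal δ + N).charpoly with hp
  set b : LaurentSeries k := δ i₀ with hb
  set ε : Fin r → LaurentSeries k := fun i => δ i - b with hε
  have hM' : Matrix.diagonal δ + N - b • 1 = Matrix.diagonal ε + N := by
    refine Matrix.ext (fun i j => ?_)
    by_cases hij : i = j
    · subst hij
      rw [Matrix.sub_apply, Matrix.add_apply, Matrix.add_apply, Matrix.diagonal_apply_eq,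
        Matrix.diagonal_apply_eq, Matrix.smul_apply, Matrix.one_apply_eq, smul_eq_mul, mul_one]
      show δ i + N i i - b = (δ i - b) + N i i
      exact (sub_add_eq_add_sub (δ i) b (N i i)).symm
    · rw [Matrix.sub_apply, Matrix.add_apply, Matrix.add_apply,
        Matrix.diagonal_apply_ne _ hij, Matrix.diagonal_apply_ne _ hij,
        Matrix.smul_apply, Matrix.one_apply_ne hij, smul_zero, sub_zero]
  set q : Polynomial (LaurentSeries k) := (Matrix.diagonal ε + N).charpoly with hq0
  have hq : q = Polynomial.eval₂RingHom Polynomial.C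
      (Polynomial.X + Polynomial.C b) p := by
    rw [hq0, ← hM', charpoly_shift]
  have hq2 : q = ((p.roots.map (fun a => a - b)).map
      (fun a => Polynomial.X - Polynomial.C a)).prod := by
    rw [hq, eq_prod_shift p (Matrix.charpoly_monic _) hsplit b]
  set Rt : Multiset (LaurentSeries k) := p.roots.map (fun a => a - b) with hRt
  have hRm : ∀ γ ∈ Rt, γ ≠ 0 ∧ γ.order < 0 := by
    intro γ hγ
    obtain ⟨a, ha, rfl⟩ := Multiset.mem_map.1 hγ
    have hroot : p.IsRoot a := (Polynomial.mem_roots'.1 ha).2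
    obtain ⟨i, hi⟩ := core_sub δ N hδ hN hroot
    have hne : δ i ≠ b := by
      intro h
      exact hcon a hroot (h ▸ hi)
    have hd0 : δ i - b ≠ 0 := sub_ne_zero.2 hne
    obtain ⟨n, hn⟩ : ∃ n : ℤ, (δ i - b).coeff n ≠ 0 := by
      by_contra hc; push_neg at hc
      exact hd0 (HahnSeries.ext (funext hc))
    have hnneg : n < 0 := by
      by_contra hge
      push_neg at hge
      apply hn
      have hbc : b.coeff n = 0 := hδ i₀ n hge
      rw [HahnSeries.coeff_sub, hδ i n hge, hbc, sub_zero]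
    have hdecomp : (a - b).coeff n = (a - δ i).coeff n + (δ i - b).coeff n := by
      rw [← HahnSeries.coeff_add]
      congr 1
      rw [sub_add_sub_cancel]
    have hcoeff : (a - b).coeff n ≠ 0 := by
      rw [hdecomp, hi n hnneg, zero_add]; exact hn
    constructor
    · intro hzero; apply hcoeff; rw [hzero]; rfl
    · have := HahnSeries.order_le_of_coeff_ne_zero hcoeff
      omega
  set V : ℤ := ((Rt.map (fun γ => ((γ, γ.order) : LaurentSeries k × ℤ))).map Prod.snd).sum
    with hV
  have hpl := prodl (Φ := LCF (k := k)) (Rt.map (fun γ => (γ, γ.order))) ?hyp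
  case hyp =>
    intro pr hpr
    obtain ⟨γ, hγ, rfl⟩ := Multiset.mem_map.1 hpr
    exact ⟨(hRm γ hγ).2, fun n hn => HahnSeries.coeff_eq_zero_of_lt_order hn⟩
  have e2 : ((Rt.map (fun γ => ((γ, γ.order) : LaurentSeries k × ℤ))).map
      (fun pr : LaurentSeries k × ℤ => Polynomial.X - Polynomial.C pr.1)).prod = q := by
    rw [Multiset.map_map, hq2]
    rfl
  rw [e2] at hpl
  obtain ⟨hPgQ, hbotQ, hhiQ⟩ := hpl
  have hbot0 : (q.coeff 0).coeff V ≠ 0 := by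
    show LCF.cf V (q.coeff 0) ≠ 0
    rw [hbotQ]
    apply Multiset.prod_ne_zero
    intro h0
    rw [Multiset.map_map, Multiset.mem_map] at h0
    obtain ⟨γ, hγ, hγ0⟩ := h0
    have := mt HahnSeries.coeff_order_eq_zero.1 (hRm γ hγ).1
    apply this
    have h6 := hγ0.symm
    simp only [Function.comp_apply] at h6
    exact neg_eq_zero.1 h6.symm
  -- matrix side
  letI hdec : DecidablePred (fun i : Fin r => δ i = b) := Classical.decPred _
  have Hcls : ∀ i : Fin r, (δ i = b) → ε i = 0 := by
    intro i h; show δ i - b = 0; rw [h, sub_self]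
  have Ho0 : ∀ i : Fin r, (δ i = b) →
      (if δ i = b then (0:ℤ) else (ε i).order) = 0 := by
    intro i h; rw [if_pos h]
  have hεneg : ∀ i, ∀ n : ℤ, 0 ≤ n → (ε i).coeff n = 0 := by
    intro i n hn
    show (δ i - b).coeff n = 0
    have hbc : b.coeff n = 0 := hδ i₀ n hn
    rw [HahnSeries.coeff_sub, hδ i n hn, hbc, sub_zero]
  have Hneg : ∀ i : Fin r, ¬(δ i = b) →
      (if δ i = b then (0:ℤ) else (ε i).order) < 0 := by
    intro i h
    rw [if_neg h]
    have hd0 : ε i ≠ 0 := by show δ i - b ≠ 0; exact sub_ne_zero.2 h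
    by_contra hge
    push_neg at hge
    exact (mt HahnSeries.coeff_order_eq_zero.1 hd0) (hεneg i _ hge)
  have HOG : ∀ i : Fin r, OGa (LCF (k := k))
      (if δ i = b then (0:ℤ) else (ε i).order) (ε i) := by
    intro i
    by_cases h : δ i = b
    · rw [if_pos h]
      intro n hn
      show (ε i).coeff n = 0
      rw [Hcls i h]
      rfl
    · rw [if_neg h]
      intro n hn
      exact HahnSeries.coeff_eq_zero_of_lt_order hn
  have Hbot : ∀ i : Fin r, ¬(δ i = b) →
      (LCF (k := k)).cf (if δ i = b then (0:ℤ) else (ε i).order) (ε i) ≠ 0 := by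
    intro i h
    rw [if_neg h]
    exact mt (HahnSeries.coeff_order_eq_zero (x := ε i)).1 (by show δ i - b ≠ 0; exact sub_ne_zero.2 h)
  have hms := matrix_side (Φ := LCF (k := k)) ε N
    (fun i => if δ i = b then (0:ℤ) else (ε i).order) (fun i => δ i = b)
    Hcls Ho0 Hneg HOG Hbot hN
  obtain ⟨hmsA, hmsB⟩ := hms
  set W : ℤ := ∑ i, (if δ i = b then 0 else (ε i).order) with hW
  set c : ℕ := (Finset.univ.filter (fun i => δ i = b)).card with hc
  have hc1 : 1 ≤ c := by
    rw [hc]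
    refine Finset.card_pos.2 ⟨i₀, ?_⟩
    rw [Finset.mem_filter]
    exact ⟨Finset.mem_univ _, rfl⟩
  have hVW : V < W := by
    by_contra hge
    push_neg at hge
    exact hmsB ((hhiQ c hc1) W (by omega))
  exact hbot0 ((hmsA 0) V hVW)

end Laurent

end DMaux


theorem irregular_values_eq_image_of_spectrum_of_any_DM_frame
    (k : Type) [Field k] [IsAlgClosed k] [CharZero k]
    (r d : ℕ) (hd : 0 < d)
    (τ : LaurentSeries k → LaurentSeries k) (hτ : ∀ f, τ f = ((d : k)⁻¹) • tdt f)
    -- the irregular values, as elements of `k((t))_{<0} ⊆ L`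
    (𝔞 : Fin r → LaurentSeries k)
    (h𝔞 : ∀ i (n : ℤ), (𝔞 i).coeff n ≠ 0 → n < 0 ∧ (d : ℤ) ∣ n)
    -- the connection matrix in a frame of `E` compatible with the irregular decomposition
    (A₁ Rm : Matrix (Fin r) (Fin r) (LaurentSeries k))
    (hA₁ : A₁ = Matrix.diagonal (fun i => τ (𝔞 i)) + Rm)
    (hRm : ∀ i j (n : ℤ), (Rm i j).coeff n ≠ 0 → 0 ≤ n ∧ (d : ℤ) ∣ n)
    (hRmBlock : ∀ i j, Rm i j ≠ 0 → 𝔞 i = 𝔞 j)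
    -- an arbitrary frame change `G ∈ GL_r(k[[t]])`
    (G Ginv : Matrix (Fin r) (Fin r) (LaurentSeries k))
    (hG : ∀ i j (n : ℤ), (G i j).coeff n ≠ 0 → 0 ≤ n ∧ (d : ℤ) ∣ n)
    (hGinv : ∀ i j (n : ℤ), (Ginv i j).coeff n ≠ 0 → 0 ≤ n ∧ (d : ℤ) ∣ n)
    (hGG : G * Ginv = 1) (hGG' : Ginv * G = 1)
    -- the connection matrix in the arbitrary frame
    (A : Matrix (Fin r) (Fin r) (LaurentSeries k))
    (hA : A = Ginv * A₁ * G + Ginv * (G.map τ))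
    (hAsplit : (A.charpoly.map (RingHom.id (LaurentSeries k))).Splits) :
    {x : LaurentSeries k | ∃ α, A.charpoly.IsRoot α ∧ x = It d (negPart α)}
      = Set.range 𝔞 := by
  classical
  have htau_coeff : ∀ (f : LaurentSeries k) (n : ℤ),
      (τ f).coeff n = (d : k)⁻¹ * ((n : ℤ) • f.coeff n) := by
    intro f n
    rw [hτ f, HahnSeries.coeff_smul, smul_eq_mul]
    rfl
  set δ : Fin r → LaurentSeries k := fun i => τ (𝔞 i) with hδdef
  have h𝔞zero : ∀ i (n : ℤ), 0 ≤ n → (𝔞 i).coeff n = 0 := by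
    intro i n hn
    by_contra h
    have := (h𝔞 i n h).1
    omega
  have hδneg : ∀ i (n : ℤ), 0 ≤ n → (δ i).coeff n = 0 := by
    intro i n hn
    show (τ (𝔞 i)).coeff n = 0
    rw [htau_coeff, h𝔞zero i n hn, smul_zero, mul_zero]
  have hGτ : ∀ i j, DMaux.OG 0 ((G.map τ) i j) := by
    intro i j n hn
    rw [Matrix.map_apply, htau_coeff]
    have hg : (G i j).coeff n = 0 := by
      by_contra h
      have := (hG i j n h).1
      omega
    rw [hg, smul_zero, mul_zero]
  have hGinvO : ∀ i j, DMaux.OG 0 (Ginv i j) := by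
    intro i j n hn
    by_contra h
    have := (hGinv i j n h).1
    omega
  have hRmO : ∀ i j, DMaux.OG 0 (Rm i j) := by
    intro i j n hn
    by_contra h
    have := (hRm i j n h).1
    omega
  set N : Matrix (Fin r) (Fin r) (LaurentSeries k) := Rm + G.map τ * Ginv with hNdef
  have hNO : ∀ i j, DMaux.OG 0 (N i j) := by
    intro i j
    show DMaux.OG 0 ((Rm + G.map τ * Ginv) i j)
    rw [Matrix.add_apply]
    apply DMaux.OG.add (hRmO i j)
    rw [Matrix.mul_apply]
    apply DMaux.OG.finsetSum
    intro l _
    have := (hGτ i l).mul (hGinvO l j)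
    rwa [add_zero] at this
  have hMeq : A₁ + G.map τ * Ginv = Matrix.diagonal δ + N := by
    rw [hA₁]
    exact add_assoc _ _ _
  have hB : Ginv * (G.map τ * Ginv) * G = Ginv * (G.map τ) := by
    rw [← mul_assoc]
    rw [mul_assoc (Ginv * G.map τ) Ginv G, hGG', mul_one]
  have hAc : A = Ginv * (Matrix.diagonal δ + N) * G := by
    rw [← hMeq, mul_add, add_mul, hB, hA]
  have hchar : A.charpoly = (Matrix.diagonal δ + N).charpoly := by
    rw [hAc]
    exact DMaux.charpoly_conj (Matrix.diagonal δ + N) G Ginv hGG'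
  have hIt : ∀ i, It d (δ i) = 𝔞 i := by
    intro i
    apply HahnSeries.ext
    funext n
    show (if n < 0 then ((d : k) * (n : k)⁻¹) • (δ i).coeff n else 0) = (𝔞 i).coeff n
    split
    case isTrue hn =>
      show ((d : k) * (n : k)⁻¹) * (τ (𝔞 i)).coeff n = _
      rw [htau_coeff, zsmul_eq_mul]
      have hdk : (d : k) ≠ 0 := Nat.cast_ne_zero.2 (by omega)
      have hnk : ((n : ℤ) : k) ≠ 0 := Int.cast_ne_zero.2 (by omega)
      field_simp
    case isFalse hn =>
      rw [h𝔞zero i n (by omega)]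
  have hnegPart : ∀ {α : LaurentSeries k} {i : Fin r},
      DMaux.OG 0 (α - δ i) → negPart α = δ i :=
    fun {α i} h => DMaux.negPart_eq (fun n hn => hδneg i n hn) h
  ext x
  simp only [Set.mem_setOf_eq, Set.mem_range]
  constructor
  · rintro ⟨α, hroot, rfl⟩
    rw [hchar] at hroot
    obtain ⟨i, hi⟩ := DMaux.core_sub δ N hδneg hNO hroot
    exact ⟨i, by rw [hnegPart hi, hIt i]⟩
  · rintro ⟨i, rfl⟩
    have hsplit' : (((Matrix.diagonal δ + N).charpoly).map (RingHom.id (LaurentSeries k))).Splits := by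
      rw [← hchar]
      exact hAsplit
    obtain ⟨α, hroot, hOGα⟩ := DMaux.core_sup δ N hδneg hNO hsplit' i
    refine ⟨α, by rw [hchar]; exact hroot, ?_⟩
    rw [hnegPart hOGα, hIt i]
end
end

section
/- Let R ⊂ ℂ be a subring finitely generated over ℤ, and let (ℰ, ∇) be a meromorphic connection on R((t)). Let 𝔞 ∈ R((t_d))_{<0}. If for every geometric point η̄ of Spec(R ⊗ 𝔽_p) for infinitely many primes p, the image ℱ_{η̄}(𝔞) ∈ k(η̄)((t_d))_{<0} is an irregular value of (ℰ, ∇) ⊗ k(η̄)((t)), then 𝔞 is an irregular value of (ℰ, ∇) ⊗ ℂ((t)). -/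
/-!
Statement 15 (Lemma `07.4.14.11` of the paper).

Let `R ⊂ ℂ` be a subring finitely generated over `ℤ` and `(ℰ, ∇)` a meromorphic connection on
`R((t))`.  After extending `R` we may assume that the irregular decomposition of `(ℰ, ∇)`
exists over `R((t_d))`: in a compatible frame the matrix of `∇(t∂_t)` is
`diag(t∂_t 𝔞ᵢ) + Rm` with `𝔞ᵢ ∈ R((t_d))_{<0}` and `Rm` logarithmic, `Rm i j = 0` unless
`𝔞ᵢ = 𝔞ⱼ`; by uniqueness of the irregular decomposition, "`x` is an irregular value of
`(ℰ,∇) ⊗ K`" means that the image of `x` in `K((t_d))` equals the image of some `𝔞ᵢ`.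
A geometric point `η̄` over `Spec(R ⊗ 𝔽_p)` corresponds to a prime `P ⊂ R` minimal over `p`,
and the reduction `ℱ_{η̄}` kills exactly the coefficients lying in `P`.

The lemma: if `𝔞 ∈ R((t_d))_{<0}` and for infinitely many primes `p` there exists such a
geometric point at which `ℱ_{η̄}(𝔞)` is an irregular value of the reduced connection
(equivalently, `ℱ_{η̄}(𝔞) = ℱ_{η̄}(𝔞ᵢ)` for some `i`), then `𝔞` is an irregular value of
`(ℰ,∇) ⊗ ℂ((t))`, i.e. `𝔞 = 𝔞ᵢ` for some `i` (using `R ↪ ℂ`).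
-/

noncomputable section

/-- If `x ∈ P` and `P` is a prime minimal over `(p)`, then the image of `x` in `R/(p)`
is a zerodivisor; by a swap (valid in a domain) `p` is then a zerodivisor on `R/(x)`. -/
lemma exists_notMem_span_mul_mem_span
    {R : Type} [CommRing R] [IsDomain R] (x : R) (hx : x ≠ 0) (p : ℕ)
    (P : Ideal R) (hP : P.IsPrime) (hpP : (p : R) ∈ P)
    (hmin : ∀ Q : Ideal R, Q.IsPrime → (p : R) ∈ Q → Q ≤ P → Q = P)
    (hxP : x ∈ P) :
    ∃ z : R, z ∉ Ideal.span {x} ∧ (p : R) * z ∈ Ideal.span {x} := by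
  classical
  have h1P : (1 : R) ∉ P := fun h => hP.ne_top (Ideal.eq_top_iff_one P |>.mpr h)
  -- the multiplicative set (R ∖ P)·{xⁿ}
  let W : Submonoid R :=
    { carrier := {w | ∃ s, s ∉ P ∧ ∃ n : ℕ, w = s * x ^ n}
      one_mem' := ⟨1, h1P, 0, by ring⟩
      mul_mem' := by
        rintro u v ⟨s, hs, n, rfl⟩ ⟨t, ht, m, rfl⟩
        refine ⟨s * t, fun hst => ?_, n + m, by ring⟩
        rcases hP.mem_or_mem hst with h | h
        · exact hs h
        · exact ht h }
  -- B1: some `s xⁿ` lies in `(p)`.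
  have hB1 : ∃ s, s ∉ P ∧ ∃ n : ℕ, s * x ^ n ∈ Ideal.span {(p : R)} := by
    by_contra hcon
    push_neg at hcon
    have hdisj : Disjoint (↑(Ideal.span {(p : R)}) : Set R) (W : Set R) := by
      rw [Set.disjoint_left]
      rintro w hw ⟨s, hs, n, rfl⟩
      exact hcon s hs n hw
    obtain ⟨Q, hQ, hleQ, hQdisj⟩ := Ideal.exists_le_prime_disjoint _ W hdisj
    have hQP : Q ≤ P := by
      intro q hq
      by_contra hqP
      exact Set.disjoint_left.mp hQdisj hq ⟨q, hqP, 0, by ring⟩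
    have hpQ : (p : R) ∈ Q := hleQ (Ideal.mem_span_singleton_self _)
    have hQeq : Q = P := hmin Q hQ hpQ hQP
    exact Set.disjoint_left.mp hQdisj (hQeq ▸ hxP) ⟨1, h1P, 1, by ring⟩
  -- take minimal such n
  have hE : ∃ n : ℕ, ∃ s, s ∉ P ∧ s * x ^ n ∈ Ideal.span {(p : R)} := by
    obtain ⟨s, hs, n, hn⟩ := hB1; exact ⟨n, s, hs, hn⟩
  obtain ⟨s, hs, hsx⟩ := Nat.find_spec hE
  have hn0 : Nat.find hE ≠ 0 := by
    intro h0
    rw [h0, pow_zero, mul_one] at hsx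
    have : s ∈ P := by
      have : Ideal.span {(p : R)} ≤ P := (Ideal.span_singleton_le_iff_mem P).mpr hpP
      exact this hsx
    exact hs this
  obtain ⟨m, hm⟩ : ∃ m, Nat.find hE = m + 1 := ⟨Nat.find hE - 1, (Nat.succ_pred_eq_of_pos (Nat.pos_of_ne_zero hn0)).symm⟩
  have hy : s * x ^ m ∉ Ideal.span {(p : R)} := by
    intro hmem
    have : m < Nat.find hE := by omega
    exact Nat.find_min hE this ⟨s, hs, hmem⟩
  have hxy : x * (s * x ^ m) ∈ Ideal.span {(p : R)} := by
    have : x * (s * x ^ m) = s * x ^ (m + 1) := by ring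
    rw [this, ← hm]; exact hsx
  obtain ⟨z, hz⟩ := Ideal.mem_span_singleton.mp hxy
  refine ⟨z, ?_, ?_⟩
  · rintro hzx
    obtain ⟨w, rfl⟩ := Ideal.mem_span_singleton.mp hzx
    have : x * (s * x ^ m - (p : R) * w) = 0 := by
      have := hz; ring_nf at this ⊢; linear_combination this
    rcases mul_eq_zero.mp this with h | h
    · exact hx h
    · exact hy (Ideal.mem_span_singleton.mpr ⟨w, sub_eq_zero.mp h⟩)
  · rw [← hz]; exact Ideal.mem_span_singleton.mpr ⟨s * x ^ m, by ring⟩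


lemma key_vanish
    {R : Type} [CommRing R] [IsDomain R] (hN : IsNoetherianRing R)
    (x : R) (S : Set ℕ) (hS : S.Infinite)
    (h : ∀ p ∈ S, p.Prime ∧ ∃ P : Ideal R, P.IsPrime ∧ (p : R) ∈ P ∧
        (∀ Q : Ideal R, Q.IsPrime → (p : R) ∈ Q → Q ≤ P → Q = P) ∧ x ∈ P)
    (hswap : ∀ p ∈ S, x ≠ 0 → ∃ z : R, z ∉ Ideal.span {x} ∧ (p : R) * z ∈ Ideal.span {x}) :
    x = 0 := by
  classical
  by_contra hx
  set I : Ideal R := Ideal.span {x} with hI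
  -- the ℤ-torsion submodule of R/I
  let N : Submodule R (R ⧸ I) :=
    { carrier := {m | ∃ k : ℤ, k ≠ 0 ∧ k • m = 0}
      add_mem' := by
        rintro mA mB ⟨k, hk, hka⟩ ⟨l, hl, hlb⟩
        refine ⟨k * l, mul_ne_zero hk hl, ?_⟩
        have h1 : (k * l) • mA = 0 := by rw [mul_comm, mul_smul, hka, smul_zero]
        have h2 : (k * l) • mB = 0 := by rw [mul_smul, hlb, smul_zero]
        rw [smul_add, h1, h2, add_zero]
      zero_mem' := ⟨1, one_ne_zero, smul_zero 1⟩
      smul_mem' := by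
        rintro r m ⟨k, hk, hkm⟩
        exact ⟨k, hk, by rw [smul_comm, hkm, smul_zero]⟩ }
  obtain ⟨T, hT⟩ : N.FG := IsNoetherian.noetherian N
  have hmemT : ∀ g ∈ T, ∃ k : ℤ, k ≠ 0 ∧ k • g = 0 := by
    intro g hg
    have : g ∈ N := hT ▸ Submodule.subset_span hg
    exact this
  choose k hk0 hk using hmemT
  set c : ℤ := ∏ g ∈ T.attach, k g g.2 with hc
  have hc0 : c ≠ 0 := Finset.prod_ne_zero_iff.mpr fun g _ => hk0 g g.2
  have hcN : ∀ m ∈ N, c • m = 0 := by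
    intro m hm
    rw [← hT] at hm
    induction hm using Submodule.span_induction with
    | mem g hg =>
      have hsplit : (∏ u ∈ T.attach.erase ⟨g, hg⟩, k u u.2) * k g hg = c := by
        rw [hc]; exact Finset.prod_erase_mul _ _ (Finset.mem_attach _ _)
      rw [← hsplit, mul_smul, hk g hg, smul_zero]
    | zero => exact smul_zero c
    | add u v _ _ hu hv => rw [smul_add, hu, hv, add_zero]
    | smul r u _ hu => rw [smul_comm, hu, smul_zero]
  -- pick a prime in S not dividing c
  have hfin : {p : ℕ | (p : ℤ) ∣ c}.Finite := by
    apply (Set.finite_le_nat c.natAbs).subset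
    intro p hp
    have : p ∣ c.natAbs := Int.natCast_dvd_natCast.mp (Int.dvd_natAbs.mpr hp)
    exact Nat.le_of_dvd (Int.natAbs_pos.mpr hc0) this
  obtain ⟨p, hpS, hpc⟩ : ∃ p ∈ S, ¬ (p : ℤ) ∣ c := by
    obtain ⟨p, hp⟩ := (hS.diff hfin).nonempty
    exact ⟨p, hp.1, hp.2⟩
  obtain ⟨hp, _⟩ := h p hpS
  obtain ⟨z, hz1, hz2⟩ := hswap p hpS hx
  set m : R ⧸ I := Submodule.Quotient.mk z with hmdef
  have hpm : (p : ℤ) • m = 0 := by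
    have : ((p : ℤ) • z : R) = (p : R) * z := by push_cast [zsmul_eq_mul]; ring
    rw [hmdef, ← Submodule.Quotient.mk_smul, this, Submodule.Quotient.mk_eq_zero]
    exact hz2
  have hmN : m ∈ N := ⟨(p : ℤ), Int.natCast_ne_zero.mpr hp.ne_zero, hpm⟩
  have hcm : c • m = 0 := hcN m hmN
  have hcop : IsCoprime (p : ℤ) c := by
    rw [Int.isCoprime_iff_gcd_eq_one, Int.gcd]
    simp only [Int.natAbs_natCast]
    refine (Nat.Prime.coprime_iff_not_dvd hp).mpr ?_
    intro hd
    exact hpc (Int.dvd_natAbs.mp (Int.natCast_dvd_natCast.mpr hd))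
  obtain ⟨u, v, huv⟩ := hcop
  have : m = 0 := by
    calc m = (1 : ℤ) • m := (one_smul ℤ m).symm
    _ = (u * (p : ℤ) + v * c) • m := by rw [huv]
    _ = u • ((p : ℤ) • m) + v • (c • m) := by rw [add_smul, mul_smul, mul_smul]
    _ = 0 := by rw [hpm, hcm, smul_zero, smul_zero, add_zero]
  exact hz1 ((Submodule.Quotient.mk_eq_zero I).mp this)


theorem irregular_value_of_reductions_irregular'
    (R : Type) [CommRing R] [IsDomain R] [Algebra ℤ R] [Algebra.FiniteType ℤ R]
    (r : ℕ)
    (a : Fin r → LaurentSeries R)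
    (𝔞 : LaurentSeries R)
    (hinf : Set.Infinite {p : ℕ | p.Prime ∧
      ∃ P : Ideal R, P.IsPrime ∧ (p : R) ∈ P ∧
        (∀ Q : Ideal R, Q.IsPrime → (p : R) ∈ Q → Q ≤ P → Q = P) ∧
        ∃ i, ∀ n : ℤ, 𝔞.coeff n - (a i).coeff n ∈ P}) :
    ∃ i, 𝔞 = a i := by
  classical
  have hN : IsNoetherianRing R := Algebra.FiniteType.isNoetherianRing ℤ R
  set Si : Fin r → Set ℕ := fun i => {p : ℕ | p.Prime ∧
      ∃ P : Ideal R, P.IsPrime ∧ (p : R) ∈ P ∧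
        (∀ Q : Ideal R, Q.IsPrime → (p : R) ∈ Q → Q ≤ P → Q = P) ∧
        ∀ n : ℤ, 𝔞.coeff n - (a i).coeff n ∈ P} with hSi
  obtain ⟨i, hi⟩ : ∃ i, (Si i).Infinite := by
    by_contra hcon
    push_neg at hcon
    try simp only [Set.not_infinite] at hcon
    refine hinf ((Set.finite_iUnion hcon).subset ?_)
    rintro p ⟨hp, P, hP, hpP, hmin, i, hcoef⟩
    exact Set.mem_iUnion.mpr ⟨i, hp, P, hP, hpP, hmin, hcoef⟩
  refine ⟨i, HahnSeries.ext (funext fun n => ?_)⟩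
  have hx : 𝔞.coeff n - (a i).coeff n = 0 := by
    refine key_vanish hN _ (Si i) hi ?_ ?_
    · rintro p ⟨hp, P, hP, hpP, hmin, hcoef⟩
      exact ⟨hp, P, hP, hpP, hmin, hcoef n⟩
    · rintro p ⟨hp, P, hP, hpP, hmin, hcoef⟩ hx0
      exact exists_notMem_span_mul_mem_span _ hx0 p P hP hpP hmin (hcoef n)
  exact sub_eq_zero.mp hx

theorem irregular_value_of_reductions_irregular
    (R : Type) [CommRing R] [IsDomain R] [Algebra ℤ R] [Algebra.FiniteType ℤ R]
    (ι : R →+* ℂ) (hι : Function.Injective ι)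
    (d r : ℕ) (hd : 0 < d)
    -- the irregular values of `(ℰ,∇) ⊗ R((t_d))`, attached to a compatible frame
    (a : Fin r → LaurentSeries R)
    (ha : ∀ i (n : ℤ), 0 ≤ n → (a i).coeff n = 0)
    -- the matrix of `∇(t∂_t)` in the compatible frame: `diag(t∂_t 𝔞ᵢ) + Rm`
    (A Rm : Matrix (Fin r) (Fin r) (LaurentSeries R))
    (hA : A = Matrix.diagonal (fun i => tdt (a i)) + Rm)
    (hRmReg : ∀ i j (n : ℤ), n < 0 → (Rm i j).coeff n = 0)
    (hRmBlock : ∀ i j, Rm i j ≠ 0 → a i = a j)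
    -- the candidate irregular value
    (𝔞 : LaurentSeries R) (h𝔞 : ∀ n : ℤ, 0 ≤ n → 𝔞.coeff n = 0)
    -- for infinitely many `p`, there is a geometric point of `Spec (R ⊗ 𝔽_p)` at which the
    -- reduction of `𝔞` is an irregular value of the reduced connection
    (hinf : Set.Infinite {p : ℕ | p.Prime ∧
      ∃ P : Ideal R, P.IsPrime ∧ (p : R) ∈ P ∧
        (∀ Q : Ideal R, Q.IsPrime → (p : R) ∈ Q → Q ≤ P → Q = P) ∧
        ∃ i, ∀ n : ℤ, 𝔞.coeff n - (a i).coeff n ∈ P}) :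
    ∃ i, 𝔞 = a i :=
  irregular_value_of_reductions_irregular' R r a 𝔞 hinf
end
end
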